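/- arXiv:2407.21528 — 3 statements merged into one kernel-verified Lean document; each statement's English description precedes it below -/
import Mathlib

section
/- Under the standing assumptions, there exist a constant C > 0 and ε₀ > 0 such that for every ε ≤ ε₀, the set { (x,x') ∈ Ω₀ × Ω₀ : C_ε(x) ≥ D(x, ∇g*(x')) } is contained in { (x,x') ∈ ℝ^{2d} : ‖x − x'‖ ≤ C ε^{1/(d+2)} }. -/
open MeasureTheory Filter Set Metric Bornology
open scoped RealInnerProductSpace ENNReal NNReal Topology

noncomputable section

abbrev Euc (d : ℕ) : Type := EuclideanSpace ℝ (Fin d)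

/-- The cone with vertex `x`, axis direction `v`, height `r` and opening angle `θ`:
`{x + u : ‖u‖ cos(θ/2) ≤ ⟪v,u⟫ ≤ r}`. -/
def otCone {d : ℕ} (x v : Euc d) (r θ : ℝ) : Set (Euc d) :=
  {y | ∃ u : Euc d, y = x + u ∧ ‖u‖ * Real.cos (θ / 2) ≤ ⟪v, u⟫ ∧ ⟪v, u⟫ ≤ r}

/-- Interior cone condition with height `r` and angle `θ`. -/
def otConeCond {d : ℕ} (Ω : Set (Euc d)) (r θ : ℝ) : Prop :=
  ∀ x ∈ Ω, ∃ v : Euc d, ‖v‖ = 1 ∧ otCone x v r θ ⊆ Ω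

/-- Convex (Legendre) conjugate `g*`. -/
def lconj {d : ℕ} (g : Euc d → ℝ) (x : Euc d) : ℝ :=
  sSup (Set.range fun y => ⟪x, y⟫ - g y)

/-- The measure `ρ dℓ_d` restricted to `Ω`. -/
def densM {d : ℕ} (Ω : Set (Euc d)) (ρ : Euc d → ℝ) : Measure (Euc d) :=
  (volume.restrict Ω).withDensity fun x => ENNReal.ofReal (ρ x)

/-- Couplings of `μ₀` and `μ₁`. -/
def otCouplings {d : ℕ} (μ₀ μ₁ : Measure (Euc d)) : Set (Measure (Euc d × Euc d)) :=
  {π | π.map Prod.fst = μ₀ ∧ π.map Prod.snd = μ₁}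

/-- Squared 2-Wasserstein cost, valued in `ℝ≥0∞`. -/
def W2sqE {d : ℕ} (μ₀ μ₁ : Measure (Euc d)) : ℝ≥0∞ :=
  ⨅ π ∈ otCouplings μ₀ μ₁, ∫⁻ p, ENNReal.ofReal (‖p.1 - p.2‖ ^ 2) ∂π

def W2sq {d : ℕ} (μ₀ μ₁ : Measure (Euc d)) : ℝ := (W2sqE μ₀ μ₁).toReal

open scoped Classical in
/-- Quadratically regularized optimal transport cost, valued in `ℝ≥0∞`;
the penalty is `+∞` when `π` is not absolutely continuous wrt `μ₀ ⊗ μ₁`. -/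
def QOTE {d : ℕ} (μ₀ μ₁ : Measure (Euc d)) (ε : ℝ) : ℝ≥0∞ :=
  ⨅ π ∈ otCouplings μ₀ μ₁,
    (∫⁻ p, ENNReal.ofReal (‖p.1 - p.2‖ ^ 2) ∂π) +
      (if π ≪ μ₀.prod μ₁ then
        ENNReal.ofReal ε * ∫⁻ p, (π.rnDeriv (μ₀.prod μ₁) p) ^ 2 ∂(μ₀.prod μ₁)
      else ⊤)

def QOT {d : ℕ} (μ₀ μ₁ : Measure (Euc d)) (ε : ℝ) : ℝ := (QOTE μ₀ μ₁ ε).toReal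

/-- `H^{d-1}(S^{d-1})`. -/
def sphArea (d : ℕ) : ℝ := (μH[(d : ℝ) - 1] (Metric.sphere (0 : Euc d) 1)).toReal

/-- Hessian quadratic form `⟪v, ∇²f(x) v⟫`. -/
def hessQ {d : ℕ} (f : Euc d → ℝ) (x v : Euc d) : ℝ :=
  ⟪v, fderiv ℝ (gradient f) x v⟫

/-- Bregman divergence `D(x,y) = g*(x) + g(y) - ⟪x,y⟫`. -/
def breg {d : ℕ} (g : Euc d → ℝ) (x y : Euc d) : ℝ :=
  lconj g x + g y - ⟪x, y⟫

/-- `C_d = 2^{(d+2)/2} H^{d-1}(S^{d-1}) / (d(d+2))`. -/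
def CdC (d : ℕ) : ℝ := 2 ^ (((d : ℝ) + 2) / 2) * sphArea d / ((d : ℝ) * ((d : ℝ) + 2))

/-- `C_ε(x) = ε^{2/(d+2)} C_d^{-2/(d+2)} (ρ₀(x) ρ₁(∇g*(x)))^{-1/(d+2)}`. -/
def CepsF {d : ℕ} (ρ₀ ρ₁ g : Euc d → ℝ) (ε : ℝ) (x : Euc d) : ℝ :=
  ε ^ ((2 : ℝ) / ((d : ℝ) + 2)) * CdC d ^ (-(2 : ℝ) / ((d : ℝ) + 2)) *
    (ρ₀ x * ρ₁ (gradient (lconj g) x)) ^ (-(1 : ℝ) / ((d : ℝ) + 2))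

/-- `m_ε(x,x')`. -/
def mEpsF {d : ℕ} (ρ₀ ρ₁ g : Euc d → ℝ) (ε : ℝ) (x x' : Euc d) : ℝ :=
  (1 / (2 * ε)) * max (CepsF ρ₀ ρ₁ g ε x + CepsF ρ₀ ρ₁ g ε x'
    - (1 / 2) * hessQ (lconj g) x (x - x') - (1 / 2) * hessQ (lconj g) x' (x - x')) 0

/-- `Ω^δ`, the points of `Ω` at distance `> δ` from the boundary. -/
def intSet {d : ℕ} (Ω : Set (Euc d)) (δ : ℝ) : Set (Euc d) :=
  {x ∈ Ω | δ < Metric.infDist x (frontier Ω)}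

/-- `Ω^{δ,c}`, the points of `Ω` at distance `≤ δ` from the boundary. -/
def frameSet {d : ℕ} (Ω : Set (Euc d)) (δ : ℝ) : Set (Euc d) :=
  {x ∈ Ω | Metric.infDist x (frontier Ω) ≤ δ}

/-- Standing assumptions (Assumption 1 of the paper). -/
structure Standing {d : ℕ} (Ω₀ Ω₁ : Set (Euc d)) (ρ₀ ρ₁ g : Euc d → ℝ) : Prop where
  hd : 1 ≤ d
  open₀ : IsOpen Ω₀
  open₁ : IsOpen Ω₁
  bdd₀ : IsBounded Ω₀
  bdd₁ : IsBounded Ω₁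
  cone : ∃ δ₀ > (0 : ℝ), ∃ θ ∈ Set.Ioo (0 : ℝ) Real.pi,
      otConeCond Ω₀ δ₀ θ ∧ otConeCond Ω₁ δ₀ θ
  holder : ∃ β : ℝ≥0, 0 < β ∧ ∃ Cβ : ℝ≥0,
      HolderOnWith Cβ β ρ₀ (closure Ω₀) ∧ HolderOnWith Cβ β ρ₁ (closure Ω₁)
  prob₀ : IsProbabilityMeasure (densM Ω₀ ρ₀)
  prob₁ : IsProbabilityMeasure (densM Ω₁ ρ₁)
  bounds : ∃ lb ub : ℝ, 0 < lb ∧ lb ≤ ub ∧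
      (∀ x ∈ Ω₀, lb ≤ ρ₀ x ∧ ρ₀ x ≤ ub) ∧ (∀ y ∈ Ω₁, lb ≤ ρ₁ y ∧ ρ₁ y ≤ ub)
  gconv : ConvexOn ℝ Ω₁ g
  gpush : (densM Ω₁ ρ₁).map (gradient g) = densM Ω₀ ρ₀
  gsmooth : ContDiffOn ℝ 2 g Ω₁
  gholder : ∃ α : ℝ≥0, 0 < α ∧ α < 1 ∧ ∃ Cα : ℝ≥0,
      HolderOnWith Cα α (fderiv ℝ (gradient g)) Ω₁
  ghess : ∃ σm σM : ℝ, 0 < σm ∧ σm ≤ σM ∧ ∀ y ∈ Ω₁, ∀ v : Euc d,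
      σm * ‖v‖ ^ 2 ≤ hessQ g y v ∧ hessQ g y v ≤ σM * ‖v‖ ^ 2
  conjsmooth : ContDiffOn ℝ 2 (lconj g) Ω₀
  conjpush : (densM Ω₀ ρ₀).map (gradient (lconj g)) = densM Ω₁ ρ₁


section AuxLemmas

variable {d : ℕ} {Ω : Set (Euc d)} {ρ : Euc d → ℝ}

lemma densM_le {ub : ℝ} (hΩ : MeasurableSet Ω) (hub : ∀ x ∈ Ω, ρ x ≤ ub)
    {A : Set (Euc d)} (hA : MeasurableSet A) :
    densM Ω ρ A ≤ ENNReal.ofReal ub * volume (A ∩ Ω) := by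
  rw [densM, withDensity_apply _ hA, Measure.restrict_restrict hA]
  calc ∫⁻ z in A ∩ Ω, ENNReal.ofReal (ρ z) ∂volume
      ≤ ∫⁻ _ in A ∩ Ω, ENNReal.ofReal ub ∂volume := by
        refine lintegral_mono_ae ?_
        refine ae_restrict_of_forall_mem (hA.inter hΩ) fun z hz => ?_
        exact ENNReal.ofReal_le_ofReal (hub z hz.2)
    _ = ENNReal.ofReal ub * volume (A ∩ Ω) := by
        rw [setLIntegral_const, mul_comm]

lemma densM_ge {lb : ℝ} (hlb : ∀ x ∈ Ω, lb ≤ ρ x)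
    {A : Set (Euc d)} (hA : MeasurableSet A) (hsub : A ⊆ Ω) :
    ENNReal.ofReal lb * volume A ≤ densM Ω ρ A := by
  rw [densM, withDensity_apply _ hA, Measure.restrict_restrict hA,
    Set.inter_eq_self_of_subset_left hsub]
  calc ENNReal.ofReal lb * volume A = ∫⁻ _ in A, ENNReal.ofReal lb ∂volume := by
        rw [setLIntegral_const, mul_comm]
    _ ≤ ∫⁻ z in A, ENNReal.ofReal (ρ z) ∂volume := by
        refine lintegral_mono_ae ?_
        exact ae_restrict_of_forall_mem hA fun z hz =>
          ENNReal.ofReal_le_ofReal (hlb z (hsub hz))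

lemma densM_pos {lb : ℝ} (hlb0 : 0 < lb) (hlb : ∀ x ∈ Ω, lb ≤ ρ x)
    {A : Set (Euc d)} (hA : IsOpen A) (hne : A.Nonempty) (hsub : A ⊆ Ω) :
    0 < densM Ω ρ A := by
  refine lt_of_lt_of_le ?_ (densM_ge hlb hA.measurableSet hsub)
  exact ENNReal.mul_pos (by simp [ENNReal.ofReal_pos, hlb0]) (hA.measure_pos volume hne).ne'


variable {d : ℕ}

-- smoothness helpers for a C²-on-open function
lemma grad_contDiffOn {f : Euc d → ℝ} {Ω : Set (Euc d)} (hf : ContDiffOn ℝ 2 f Ω)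
    (hΩ : IsOpen Ω) : ContDiffOn ℝ 1 (gradient f) Ω := by
  have h1 : ContDiffOn ℝ 1 (fderiv ℝ f) Ω := hf.fderiv_of_isOpen hΩ (by norm_num)
  have : gradient f = fun x => (InnerProductSpace.toDual ℝ (Euc d)).symm (fderiv ℝ f x) := rfl
  rw [this]
  exact ((InnerProductSpace.toDual ℝ (Euc d)).symm.contDiff).comp_contDiffOn h1

lemma grad_continuousOn {f : Euc d → ℝ} {Ω : Set (Euc d)} (hf : ContDiffOn ℝ 2 f Ω)
    (hΩ : IsOpen Ω) : ContinuousOn (gradient f) Ω :=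
  (grad_contDiffOn hf hΩ).continuousOn

lemma grad_hasFDerivAt {f : Euc d → ℝ} {Ω : Set (Euc d)} (hf : ContDiffOn ℝ 2 f Ω)
    (hΩ : IsOpen Ω) {x : Euc d} (hx : x ∈ Ω) :
    HasFDerivAt (gradient f) (fderiv ℝ (gradient f) x) x := by
  have := ((grad_contDiffOn hf hΩ).differentiableOn one_ne_zero).differentiableAt
    (hΩ.mem_nhds hx)
  exact this.hasFDerivAt

lemma hess_continuousOn {f : Euc d → ℝ} {Ω : Set (Euc d)} (hf : ContDiffOn ℝ 2 f Ω)
    (hΩ : IsOpen Ω) : ContinuousOn (fun x => fderiv ℝ (gradient f) x) Ω := by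
  have := (grad_contDiffOn hf hΩ).fderiv_of_isOpen hΩ (by norm_num : (0:WithTop ℕ∞) + 1 ≤ 1)
  simpa [contDiffOn_zero] using this

lemma hess_symm {f : Euc d → ℝ} {Ω : Set (Euc d)} (hf : ContDiffOn ℝ 2 f Ω)
    (hΩ : IsOpen Ω) {x : Euc d} (hx : x ∈ Ω) (v w : Euc d) :
    ⟪w, fderiv ℝ (gradient f) x v⟫ = ⟪v, fderiv ℝ (gradient f) x w⟫ := by
  have hct : ContDiffAt ℝ 2 f x := hf.contDiffAt (hΩ.mem_nhds hx)
  have hsym := hct.isSymmSndFDerivAt (by simp)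
  -- fderiv of gradient in terms of second fderiv
  have hdf : DifferentiableAt ℝ (fderiv ℝ f) x := by
    have := (hf.fderiv_of_isOpen hΩ (by norm_num : (1:WithTop ℕ∞) + 1 ≤ 2)).differentiableOn
      one_ne_zero
    exact this.differentiableAt (hΩ.mem_nhds hx)
  have key : fderiv ℝ (gradient f) x = ((InnerProductSpace.toDual ℝ (Euc d)).symm.toContinuousLinearEquiv.toContinuousLinearMap).comp
      (fderiv ℝ (fderiv ℝ f) x) := by
    have : gradient f = fun y => (InnerProductSpace.toDual ℝ (Euc d)).symm.toContinuousLinearEquiv.toContinuousLinearMap (fderiv ℝ f y) := rfl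
    rw [this]
    exact (((InnerProductSpace.toDual ℝ (Euc d)).symm.toContinuousLinearEquiv.toContinuousLinearMap).hasFDerivAt.comp x hdf.hasFDerivAt).fderiv
  have h1 : ∀ u z, ⟪z, fderiv ℝ (gradient f) x u⟫ = fderiv ℝ (fderiv ℝ f) x u z := by
    intro u z
    rw [key]
    simp only [ContinuousLinearMap.comp_apply]
    rw [real_inner_comm]
    exact InnerProductSpace.toDual_symm_apply
  rw [h1, h1]
  exact hsym.eq v w


lemma opnorm_le_of_form {A : Euc d →L[ℝ] Euc d} {σM : ℝ}
    (hsym : ∀ v w : Euc d, ⟪w, A v⟫ = ⟪v, A w⟫)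
    (h0 : ∀ v : Euc d, 0 ≤ ⟪v, A v⟫) (hM : ∀ v : Euc d, ⟪v, A v⟫ ≤ σM * ‖v‖ ^ 2)
    (hσM : 0 ≤ σM) : ‖A‖ ≤ σM := by
  refine A.opNorm_le_bound hσM fun v => ?_
  rcases eq_or_ne (A v) 0 with hv | hv
  · simp [hv]; positivity
  -- Cauchy-Schwarz for the PSD form B(u,w) = ⟪u, A w⟫
  have key : ∀ u w : Euc d, ⟪u, A w⟫ ^ 2 ≤ ⟪u, A u⟫ * ⟪w, A w⟫ := by
    intro u w
    have hq : ∀ t : ℝ, 0 ≤ ⟪w, A w⟫ * (t * t) + (2 * ⟪u, A w⟫) * t + ⟪u, A u⟫ := by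
      intro t
      have h := h0 (u + t • w)
      have expand : ⟪u + t • w, A (u + t • w)⟫
          = ⟪w, A w⟫ * (t * t) + (2 * ⟪u, A w⟫) * t + ⟪u, A u⟫ := by
        rw [map_add, A.map_smul]
        rw [inner_add_left, inner_add_right, inner_add_right]
        rw [real_inner_smul_left, real_inner_smul_right, real_inner_smul_left,
          real_inner_smul_right]
        have h1 : ⟪w, A u⟫ = ⟪u, A w⟫ := hsym u w
        rw [h1]; ring
      linarith [expand ▸ h]
    have hd := discrim_le_zero hq
    rw [discrim] at hd
    nlinarith [hd]
  have h2 := key (A v) v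
  have h3 : ⟪A v, A v⟫ = ‖A v‖ ^ 2 := real_inner_self_eq_norm_sq (A v)
  rw [h3] at h2
  have h4 : ⟪A v, A (A v)⟫ ≤ σM * ‖A v‖ ^ 2 := hM (A v)
  have h5 : ⟪v, A v⟫ ≤ σM * ‖v‖ ^ 2 := hM v
  have h8 : (‖A v‖ ^ 2) ^ 2 ≤ (σM * ‖A v‖ ^ 2) * (σM * ‖v‖ ^ 2) := by
    calc (‖A v‖ ^ 2) ^ 2 ≤ ⟪A v, A (A v)⟫ * ⟪v, A v⟫ := h2
      _ ≤ (σM * ‖A v‖ ^ 2) * (σM * ‖v‖ ^ 2) := by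
          apply mul_le_mul h4 h5 (h0 v); positivity
  have hAv : 0 < ‖A v‖ := norm_pos_iff.mpr hv
  have hX : 0 < ‖A v‖ ^ 2 := by positivity
  have h9 : ‖A v‖ ^ 2 ≤ σM ^ 2 * ‖v‖ ^ 2 := by nlinarith [h8, hX]
  nlinarith [h9, hAv, norm_nonneg v, mul_nonneg hσM (norm_nonneg v)]


lemma inner_gradient {f : Euc d → ℝ} {z v : Euc d} :
    ⟪gradient f z, v⟫ = fderiv ℝ f z v := by
  have : gradient f z = (InnerProductSpace.toDual ℝ (Euc d)).symm (fderiv ℝ f z) := rfl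
  rw [this]
  exact InnerProductSpace.toDual_symm_apply



lemma strong_conv {g : Euc d → ℝ} {Ω₁ : Set (Euc d)} (hconv : Convex ℝ Ω₁) (hO : IsOpen Ω₁)
    (hg : ContDiffOn ℝ 2 g Ω₁) {σm : ℝ}
    (hσ : ∀ y ∈ Ω₁, ∀ v : Euc d, σm * ‖v‖ ^ 2 ≤ ⟪v, fderiv ℝ (gradient g) y v⟫)
    {y y' : Euc d} (hy : y ∈ Ω₁) (hy' : y' ∈ Ω₁) :
    g y + ⟪gradient g y, y' - y⟫ + σm / 2 * ‖y' - y‖ ^ 2 ≤ g y' := by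
  set v := y' - y with hv
  set γ : ℝ → Euc d := fun t => y + t • v with hγdef
  have hmem : ∀ t ∈ Icc (0:ℝ) 1, γ t ∈ Ω₁ := fun t ht =>
    hconv.add_smul_sub_mem hy hy' ht
  have hγ : ∀ t : ℝ, HasDerivAt γ v t := by
    intro t
    simpa [hγdef] using ((hasDerivAt_id t).smul_const v).const_add y
  have hγ0 : γ 0 = y := by simp [hγdef]
  have hγ1 : γ 1 = y' := by simp [hγdef, hv]
  -- derivative of t ↦ g (γ t)
  have hq : ∀ t ∈ Icc (0:ℝ) 1,
      HasDerivAt (fun s => g (γ s)) ⟪gradient g (γ t), v⟫ t := by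
    intro t ht
    have hdg : HasFDerivAt g (fderiv ℝ g (γ t)) (γ t) :=
      (((hg.differentiableOn (by norm_num)).differentiableAt
        (hO.mem_nhds (hmem t ht)))).hasFDerivAt
    have := hdg.comp_hasDerivAt t (hγ t)
    rwa [inner_gradient]
  -- derivative of t ↦ ⟪gradient g (γ t), v⟫
  have hp : ∀ t ∈ Icc (0:ℝ) 1,
      HasDerivAt (fun s => ⟪gradient g (γ s), v⟫)
        ⟪v, fderiv ℝ (gradient g) (γ t) v⟫ t := by
    intro t ht
    have hdG : HasDerivAt (fun s => gradient g (γ s))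
        (fderiv ℝ (gradient g) (γ t) v) t :=
      (grad_hasFDerivAt hg hO (hmem t ht)).comp_hasDerivAt t (hγ t)
    have h2 := hdG.inner ℝ (hasDerivAt_const t v)
    have e : (⟪gradient g (γ t), (0:Euc d)⟫ + ⟪fderiv ℝ (gradient g) (γ t) v, v⟫)
        = ⟪v, fderiv ℝ (gradient g) (γ t) v⟫ := by
      rw [inner_zero_right, real_inner_comm]; ring
    rw [e] at h2; exact h2
  -- Step A : w is monotone
  set w : ℝ → ℝ := fun t => ⟪gradient g (γ t), v⟫ - σm * ‖v‖ ^ 2 * t with hwdef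
  have hw : ∀ t ∈ Icc (0:ℝ) 1, HasDerivAt w
      (⟪v, fderiv ℝ (gradient g) (γ t) v⟫ - σm * ‖v‖ ^ 2) t := by
    intro t ht
    have h4 : HasDerivAt (fun s : ℝ => σm * ‖v‖ ^ 2 * s) (σm * ‖v‖ ^ 2) t := by
      simpa using (hasDerivAt_id t).const_mul (σm * ‖v‖ ^ 2)
    exact (hp t ht).sub h4
  have hwmono : MonotoneOn w (Icc (0:ℝ) 1) := by
    apply monotoneOn_of_deriv_nonneg (convex_Icc 0 1)
    · exact fun t ht => ((hw t ht).continuousAt).continuousWithinAt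
    · intro t ht
      rw [interior_Icc] at ht
      exact ((hw t (Ioo_subset_Icc_self ht)).differentiableAt).differentiableWithinAt
    · intro t ht
      rw [interior_Icc] at ht
      rw [(hw t (Ioo_subset_Icc_self ht)).deriv]
      have := hσ (γ t) (hmem t (Ioo_subset_Icc_self ht)) v
      linarith
  -- Step B : r is monotone
  set r : ℝ → ℝ := fun t => g (γ t) - (⟪gradient g y, v⟫ * t + σm / 2 * ‖v‖ ^ 2 * t ^ 2)
    with hrdef
  have hr : ∀ t ∈ Icc (0:ℝ) 1, HasDerivAt r
      (⟪gradient g (γ t), v⟫ - (⟪gradient g y, v⟫ + σm / 2 * ‖v‖ ^ 2 * (2 * t))) t := by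
    intro t ht
    refine (hq t ht).sub ?_
    have h1 : HasDerivAt (fun s : ℝ => ⟪gradient g y, v⟫ * s) ⟪gradient g y, v⟫ t := by
      simpa using (hasDerivAt_id t).const_mul ⟪gradient g y, v⟫
    have h2 : HasDerivAt (fun s : ℝ => σm / 2 * ‖v‖ ^ 2 * s ^ 2)
        (σm / 2 * ‖v‖ ^ 2 * (2 * t)) t := by
      have := ((hasDerivAt_pow 2 t)).const_mul (σm / 2 * ‖v‖ ^ 2)
      simpa [mul_comm, mul_assoc] using this
    exact h1.add h2
  have hrmono : MonotoneOn r (Icc (0:ℝ) 1) := by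
    apply monotoneOn_of_deriv_nonneg (convex_Icc 0 1)
    · exact fun t ht => ((hr t ht).continuousAt).continuousWithinAt
    · intro t ht
      rw [interior_Icc] at ht
      exact ((hr t (Ioo_subset_Icc_self ht)).differentiableAt).differentiableWithinAt
    · intro t ht
      rw [interior_Icc] at ht
      rw [(hr t (Ioo_subset_Icc_self ht)).deriv]
      have ht' := Ioo_subset_Icc_self ht
      have hA := hwmono (left_mem_Icc.mpr zero_le_one) ht' ht.1.le
      have : w 0 = ⟪gradient g y, v⟫ := by simp [hwdef, hγ0]
      rw [this] at hA
      simp only [hwdef] at hA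
      have hnn : 0 ≤ σm * ‖v‖ ^ 2 * t - σm / 2 * ‖v‖ ^ 2 * (2 * t) := by ring_nf; linarith
      linarith
  have := hrmono (left_mem_Icc.mpr zero_le_one) (right_mem_Icc.mpr zero_le_one) zero_le_one
  simp only [hrdef, hγ0, hγ1] at this
  nlinarith [this]

lemma grad_lipschitz {g : Euc d → ℝ} {Ω₁ : Set (Euc d)} (hconv : Convex ℝ Ω₁)
    (hO : IsOpen Ω₁) (hg : ContDiffOn ℝ 2 g Ω₁) {σm σM : ℝ} (hσm : 0 ≤ σm) (hσM : σm ≤ σM)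
    (hsym : ∀ y ∈ Ω₁, ∀ v w : Euc d,
      ⟪w, fderiv ℝ (gradient g) y v⟫ = ⟪v, fderiv ℝ (gradient g) y w⟫)
    (hσ : ∀ y ∈ Ω₁, ∀ v : Euc d, σm * ‖v‖ ^ 2 ≤ ⟪v, fderiv ℝ (gradient g) y v⟫ ∧
      ⟪v, fderiv ℝ (gradient g) y v⟫ ≤ σM * ‖v‖ ^ 2)
    {y y' : Euc d} (hy : y ∈ Ω₁) (hy' : y' ∈ Ω₁) :
    ‖gradient g y - gradient g y'‖ ≤ σM * ‖y - y'‖ := by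
  refine Convex.norm_image_sub_le_of_norm_hasFDerivWithin_le
    (f' := fun z => fderiv ℝ (gradient g) z)
    (fun z hz => (grad_hasFDerivAt hg hO hz).hasFDerivWithinAt) ?_ hconv hy' hy
  intro z hz
  refine opnorm_le_of_form (hsym z hz) ?_ (fun v => (hσ z hz v).2) (hσm.trans hσM)
  intro v
  refine le_trans ?_ (hσ z hz v).1
  positivity



end AuxLemmas

section StandingLemmas

variable {d : ℕ} {Ω₀ Ω₁ : Set (Euc d)} {ρ₀ ρ₁ g : Euc d → ℝ}

lemma Standing.aemeas (h : Standing Ω₀ Ω₁ ρ₀ ρ₁ g) :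
    AEMeasurable (gradient (lconj g)) (densM Ω₀ ρ₀) := by
  by_contra hn
  have h0 := MeasureTheory.Measure.map_of_not_aemeasurable hn
  have h1 := h.prob₁.measure_univ
  rw [← h.conjpush, h0] at h1
  simp at h1

lemma Standing.push_apply (h : Standing Ω₀ Ω₁ ρ₀ ρ₁ g) {A : Set (Euc d)}
    (hA : MeasurableSet A) :
    densM Ω₁ ρ₁ A = densM Ω₀ ρ₀ ((gradient (lconj g)) ⁻¹' A) := by
  rw [← h.conjpush, MeasureTheory.Measure.map_apply_of_aemeasurable h.aemeas hA]

lemma Standing.nonempty₁ (h : Standing Ω₀ Ω₁ ρ₀ ρ₁ g) : Ω₁.Nonempty := by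
  by_contra hne
  rw [Set.not_nonempty_iff_eq_empty] at hne
  have h1 := h.prob₁.measure_univ
  rw [densM, hne] at h1
  simp at h1

lemma Standing.nontrivial (h : Standing Ω₀ Ω₁ ρ₀ ρ₁ g) : Nontrivial (Euc d) := by
  refine ⟨⟨0, EuclideanSpace.single ⟨0, h.hd⟩ 1, ?_⟩⟩
  intro hc
  have := congrArg (fun f : Euc d => f ⟨0, h.hd⟩) hc
  simp at this

lemma Standing.bddAbove_conj (h : Standing Ω₀ Ω₁ ρ₀ ρ₁ g) :
    ∀ x ∈ Ω₀, BddAbove (Set.range fun y => ⟪x, y⟫ - g y) := by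
  intro x₀ hx₀
  by_contra hU0
  set U : Set (Euc d) := {x | ¬ BddAbove (Set.range fun y => ⟪x, y⟫ - g y)} with hUdef
  have hx₀U : x₀ ∈ U := hU0
  by_cases hint : x₀ ∈ interior U
  · -- the junk region has nonempty interior : atom of the pushforward at 0
    haveI := h.nontrivial
    set V := interior U ∩ Ω₀ with hV
    have hVopen : IsOpen V := isOpen_interior.inter h.open₀
    have hVne : V.Nonempty := ⟨x₀, hint, hx₀⟩
    have hgrad0 : ∀ v ∈ V, gradient (lconj g) v = 0 := by
      intro v hv
      have hev : lconj g =ᶠ[𝓝 v] fun _ => (0:ℝ) := by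
        filter_upwards [isOpen_interior.mem_nhds hv.1] with u hu
        exact Real.sSup_of_not_bddAbove (interior_subset hu)
      have heq : fderiv ℝ (lconj g) v = fderiv ℝ (fun _ => (0:ℝ)) v := hev.fderiv_eq
      show (InnerProductSpace.toDual ℝ (Euc d)).symm (fderiv ℝ (lconj g) v) = 0
      rw [heq, fderiv_const_apply]
      simp
    obtain ⟨lb, ub, hlb0, hlbub, hb₀, hb₁⟩ := h.bounds
    have h1 : 0 < densM Ω₀ ρ₀ V :=
      densM_pos hlb0 (fun z hz => (hb₀ z hz).1) hVopen hVne Set.inter_subset_right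
    have h2 := h.push_apply (measurableSet_singleton (0 : Euc d))
    have h3 : densM Ω₁ ρ₁ {0} ≤ ENNReal.ofReal ub * volume (({0}:Set (Euc d)) ∩ Ω₁) :=
      densM_le h.open₁.measurableSet (fun z hz => (hb₁ z hz).2) (measurableSet_singleton 0)
    have h4 : volume (({0}:Set (Euc d)) ∩ Ω₁) = 0 :=
      measure_mono_null Set.inter_subset_left (measure_singleton 0)
    have h5 : densM Ω₀ ρ₀ V ≤ densM Ω₀ ρ₀ ((gradient (lconj g)) ⁻¹' {0}) := by
      apply measure_mono
      intro v hv
      simp only [Set.mem_preimage, Set.mem_singleton_iff]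
      exact hgrad0 v hv
    rw [h4, mul_zero] at h3
    rw [h2] at h3
    exact absurd (le_trans h5 h3) (not_le.mpr h1)
  · -- x₀ is approached by points where the sup is genuine
    obtain ⟨r, hr0, hball⟩ := Metric.isOpen_iff.mp h.open₀ x₀ hx₀
    have hseq : ∀ n : ℕ, ∃ z, z ∈ ball x₀ (min r (1/(n+1))) ∧ z ∉ U := by
      intro n
      by_contra hc
      push_neg at hc
      apply hint
      rw [mem_interior_iff_mem_nhds]
      refine Filter.mem_of_superset (Metric.ball_mem_nhds x₀ ?_) hc
      exact lt_min hr0 (by positivity)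
    choose z hz hzU using hseq
    have hzΩ : ∀ n, z n ∈ Ω₀ := fun n =>
      hball (Metric.ball_subset_ball (min_le_left _ _) (hz n))
    have hztend : Tendsto z atTop (𝓝 x₀) := by
      rw [tendsto_iff_dist_tendsto_zero]
      refine squeeze_zero (g := fun n : ℕ => 1/((n:ℝ)+1)) (fun n => dist_nonneg)
        (fun n => ?_) tendsto_one_div_add_atTop_nhds_zero_nat
      exact le_of_lt (lt_of_lt_of_le (mem_ball.mp (hz n)) (min_le_right _ _))
    have hcont : ContinuousAt (lconj g) x₀ :=
      h.conjsmooth.continuousOn.continuousAt (h.open₀.mem_nhds hx₀)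
    have hφt : Tendsto (fun n => lconj g (z n)) atTop (𝓝 (lconj g x₀)) :=
      hcont.tendsto.comp hztend
    obtain ⟨a, ⟨ystar, hystar⟩, ha⟩ := not_bddAbove_iff.mp hU0 (lconj g x₀ + 1)
    rw [← hystar] at ha
    have hlow : ∀ n, ⟪z n, ystar⟫ - g ystar ≤ lconj g (z n) := fun n =>
      le_csSup (not_not.mp (hzU n)) ⟨ystar, rfl⟩
    have hinner : Tendsto (fun n => ⟪z n, ystar⟫ - g ystar) atTop (𝓝 (⟪x₀, ystar⟫ - g ystar)) := by
      have : Continuous fun w : Euc d => ⟪w, ystar⟫ - g ystar :=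
        (continuous_id.inner continuous_const).sub continuous_const
      exact (this.tendsto x₀).comp hztend
    have hfin := le_of_tendsto_of_tendsto' hinner hφt hlow
    simp only at ha
    linarith

lemma Standing.grad_mem_closure (h : Standing Ω₀ Ω₁ ρ₀ ρ₁ g) :
    ∀ x ∈ Ω₀, gradient (lconj g) x ∈ closure Ω₁ := by
  intro x₀ hx₀
  by_contra hc
  set S := Ω₀ ∩ (gradient (lconj g)) ⁻¹' (closure Ω₁)ᶜ with hS
  have hSopen : IsOpen S :=
    (grad_continuousOn h.conjsmooth h.open₀).isOpen_inter_preimage h.open₀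
      isClosed_closure.isOpen_compl
  obtain ⟨lb, ub, hlb0, hlbub, hb₀, hb₁⟩ := h.bounds
  have h1 : 0 < densM Ω₀ ρ₀ S :=
    densM_pos hlb0 (fun z hz => (hb₀ z hz).1) hSopen ⟨x₀, hx₀, hc⟩ Set.inter_subset_left
  have h2 := h.push_apply (A := (closure Ω₁)ᶜ) isClosed_closure.isOpen_compl.measurableSet
  have h3 : densM Ω₁ ρ₁ (closure Ω₁)ᶜ
      ≤ ENNReal.ofReal ub * volume ((closure Ω₁)ᶜ ∩ Ω₁) :=
    densM_le h.open₁.measurableSet (fun z hz => (hb₁ z hz).2)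
      isClosed_closure.isOpen_compl.measurableSet
  have h4 : (closure Ω₁)ᶜ ∩ Ω₁ = ∅ := by
    ext z
    simp only [Set.mem_inter_iff, Set.mem_compl_iff, Set.mem_empty_iff_false, iff_false]
    rintro ⟨hz1, hz2⟩
    exact hz1 (subset_closure hz2)
  rw [h4, measure_empty, mul_zero] at h3
  have h5 : densM Ω₀ ρ₀ S ≤ densM Ω₀ ρ₀ ((gradient (lconj g)) ⁻¹' (closure Ω₁)ᶜ) :=
    measure_mono Set.inter_subset_right
  rw [← h2] at h5
  exact absurd (le_trans h5 h3) (not_le.mpr h1)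

lemma Standing.grad_mem (h : Standing Ω₀ Ω₁ ρ₀ ρ₁ g) :
    ∀ x ∈ Ω₀, gradient (lconj g) x ∈ Ω₁ := by
  intro x₀ hx₀
  by_contra hc
  set T := gradient (lconj g) with hT
  -- separating functional
  obtain ⟨f, hf⟩ := geometric_hahn_banach_open_point h.gconv.1 h.open₁ hc
  have hfle : ∀ u ∈ closure Ω₁, f u ≤ f (T x₀) := by
    intro u hu
    exact closure_minimal (fun a ha => (hf a ha).le)
      (isClosed_le f.continuous continuous_const) hu
  -- the composed map has an interior maximum at x₀
  have hψmax : IsLocalMax (fun z => f (T z)) x₀ := by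
    filter_upwards [h.open₀.mem_nhds hx₀] with z hz
    exact hfle _ (h.grad_mem_closure z hz)
  have hdT : HasFDerivAt T (fderiv ℝ T x₀) x₀ := grad_hasFDerivAt h.conjsmooth h.open₀ hx₀
  have hψd : HasFDerivAt (fun z => f (T z)) (f.comp (fderiv ℝ T x₀)) x₀ :=
    f.hasFDerivAt.comp x₀ hdT
  have hz0 : f.comp (fderiv ℝ T x₀) = 0 := by
    have h0 := hψmax.fderiv_eq_zero
    rwa [hψd.fderiv] at h0
  set n := (InnerProductSpace.toDual ℝ (Euc d)).symm f with hn
  have hnf : ∀ u : Euc d, ⟪n, u⟫ = f u := fun u => InnerProductSpace.toDual_symm_apply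
  have hn0 : n ≠ 0 := by
    obtain ⟨a, ha⟩ := h.nonempty₁
    intro hcn
    have h1 : f a < f (T x₀) := hf a ha
    rw [← hnf a, ← hnf (T x₀), hcn] at h1
    simp at h1
  set A := fderiv ℝ T x₀ with hA
  have hAn : A n = 0 := by
    have hfav : ∀ v, ⟪n, A v⟫ = 0 := by
      intro v
      rw [hnf]
      exact ContinuousLinearMap.ext_iff.mp hz0 v
    have hsymA : ∀ v w : Euc d, ⟪w, A v⟫ = ⟪v, A w⟫ :=
      fun v w => hess_symm h.conjsmooth h.open₀ hx₀ v w
    have h2 : ⟪A n, A n⟫ = 0 := by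
      have := hsymA (A n) n
      rw [← this, hfav (A n)]  -- careful
    exact inner_self_eq_zero.mp h2
  have hdet : LinearMap.det (A : Euc d →ₗ[ℝ] Euc d) = 0 := by
    by_contra hd
    have he := (LinearMap.equivOfDetNeZero (A : Euc d →ₗ[ℝ] Euc d) hd).injective
    apply hn0
    have : (A : Euc d →ₗ[ℝ] Euc d) n = (A : Euc d →ₗ[ℝ] Euc d) 0 := by simpa using hAn
    exact he this
  -- Jacobian contradiction
  obtain ⟨lb, ub, hlb0, hlbub, hb₀, hb₁⟩ := h.bounds
  have hdetc : ContinuousAt (fun z => (fderiv ℝ T z).det) x₀ :=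
    ContinuousLinearMap.continuous_det.continuousAt.comp
      ((hess_continuousOn h.conjsmooth h.open₀).continuousAt (h.open₀.mem_nhds hx₀))
  set δ := lb / (2 * (ub + 1)) with hδ
  have hub0 : 0 < ub := lt_of_lt_of_le hlb0 hlbub
  have hδ0 : 0 < δ := by positivity
  have hev : ∀ᶠ z in 𝓝 x₀, |(fderiv ℝ T z).det| < δ := by
    have h6 : Tendsto (fun z => |(fderiv ℝ T z).det|) (𝓝 x₀) (𝓝 |(fderiv ℝ T x₀).det|) :=
      hdetc.abs
    have h7 : |(fderiv ℝ T x₀).det| = 0 := by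
      have : (fderiv ℝ T x₀).det = 0 := hdet
      rw [this, abs_zero]
    rw [h7] at h6
    exact h6.eventually_lt_const hδ0
  obtain ⟨s₁, hs₁, hsball⟩ := Metric.eventually_nhds_iff_ball.mp
    (hev.and (h.open₀.eventually_mem hx₀))
  set s := s₁ / 2 with hs
  set B := Metric.closedBall x₀ s with hB
  have hBsub : B ⊆ Metric.ball x₀ s₁ := by
    rw [hB, hs]
    intro z hz
    have := mem_closedBall.mp hz
    exact mem_ball.mpr (lt_of_le_of_lt this (by linarith))
  have hBΩ : B ⊆ Ω₀ := fun z hz => (hsball z (hBsub hz)).2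
  have hBdet : ∀ z ∈ B, |(fderiv ℝ T z).det| ≤ δ := fun z hz => (hsball z (hBsub hz)).1.le
  have hTd : ∀ z ∈ B, HasFDerivWithinAt T (fderiv ℝ T z) B z := fun z hz =>
    (grad_hasFDerivAt h.conjsmooth h.open₀ (hBΩ hz)).hasFDerivWithinAt
  have himg := addHaar_image_le_lintegral_abs_det_fderiv volume
    (measurableSet_closedBall) hTd
  have h7 : (∫⁻ z in B, ENNReal.ofReal |(fderiv ℝ T z).det| ∂volume)
      ≤ ENNReal.ofReal δ * volume B := by
    calc (∫⁻ z in B, ENNReal.ofReal |(fderiv ℝ T z).det| ∂volume)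
        ≤ ∫⁻ _ in B, ENNReal.ofReal δ ∂volume := by
          refine lintegral_mono_ae (ae_restrict_of_forall_mem measurableSet_closedBall
            fun z hz => ?_)
          exact ENNReal.ofReal_le_ofReal (hBdet z hz)
      _ = ENNReal.ofReal δ * volume B := by rw [setLIntegral_const, mul_comm]
  set K := T '' B with hK
  have hKcompact : IsCompact K := (isCompact_closedBall x₀ s).image_of_continuousOn
    ((grad_continuousOn h.conjsmooth h.open₀).mono hBΩ)
  have hKmeas : MeasurableSet K := hKcompact.measurableSet
  have hc1 : ENNReal.ofReal lb * volume B ≤ densM Ω₀ ρ₀ B :=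
    densM_ge (fun z hz => (hb₀ z hz).1) measurableSet_closedBall hBΩ
  have hc2 : densM Ω₀ ρ₀ B ≤ densM Ω₀ ρ₀ (T ⁻¹' K) :=
    measure_mono (Set.subset_preimage_image T B)
  have hc3 : densM Ω₀ ρ₀ (T ⁻¹' K) = densM Ω₁ ρ₁ K := (h.push_apply hKmeas).symm
  have hc4 : densM Ω₁ ρ₁ K ≤ ENNReal.ofReal ub * volume K := by
    refine le_trans (densM_le h.open₁.measurableSet (fun z hz => (hb₁ z hz).2) hKmeas) ?_
    exact mul_le_mul_of_nonneg_left (measure_mono Set.inter_subset_left) (by positivity)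
  have hc5 : volume K ≤ ENNReal.ofReal δ * volume B := le_trans himg h7
  have hfinal : ENNReal.ofReal lb * volume B
      ≤ (ENNReal.ofReal ub * ENNReal.ofReal δ) * volume B := by
    calc ENNReal.ofReal lb * volume B ≤ densM Ω₀ ρ₀ B := hc1
      _ ≤ densM Ω₁ ρ₁ K := hc3 ▸ hc2
      _ ≤ ENNReal.ofReal ub * volume K := hc4
      _ ≤ ENNReal.ofReal ub * (ENNReal.ofReal δ * volume B) := mul_le_mul_of_nonneg_left hc5 (by positivity)
      _ = (ENNReal.ofReal ub * ENNReal.ofReal δ) * volume B := by rw [mul_assoc]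
  have hs0 : 0 < s := by positivity
  have hvol0 : volume B ≠ 0 := by
    refine (lt_of_lt_of_le ?_ (measure_mono Metric.ball_subset_closedBall)).ne'
    exact Metric.isOpen_ball.measure_pos volume (Metric.nonempty_ball.mpr hs0)
  have hvolt : volume B ≠ ⊤ := (isCompact_closedBall x₀ s).measure_lt_top.ne
  have hle : ENNReal.ofReal lb ≤ ENNReal.ofReal ub * ENNReal.ofReal δ :=
    (ENNReal.mul_le_mul_iff_left hvol0 hvolt).mp hfinal
  rw [← ENNReal.ofReal_mul hub0.le] at hle
  have hlb2 : lb ≤ ub * δ := by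
    have := ENNReal.ofReal_le_ofReal_iff (by positivity : (0:ℝ) ≤ ub * δ) |>.mp hle
    exact this
  have : ub * δ < lb := by
    have h9 : ub * δ = ub * lb / (2 * (ub + 1)) := by rw [hδ]; ring
    rw [h9, div_lt_iff₀ (by positivity)]
    nlinarith
  linarith

lemma hasFDerivAt_inner_left (c x : Euc d) :
    HasFDerivAt (fun w : Euc d => ⟪c, w⟫) (innerSL ℝ c) x := by
  simpa using (innerSL ℝ c).hasFDerivAt

lemma hasFDerivAt_inner_const' (c x : Euc d) :
    HasFDerivAt (fun w : Euc d => ⟪w, c⟫) (innerSL ℝ c) x := by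
  have e : (fun w : Euc d => ⟪w, c⟫) = fun w => (innerSL ℝ c) w := by
    funext w
    simp only [innerSL_apply_apply]
    exact real_inner_comm _ _
  rw [e]
  exact (innerSL ℝ c).hasFDerivAt

lemma grad_eq_of_fderiv_eq_innerSL {f : Euc d → ℝ} {x c : Euc d}
    (hf : fderiv ℝ f x = innerSL ℝ c) : gradient f x = c := by
  show (InnerProductSpace.toDual ℝ (Euc d)).symm (fderiv ℝ f x) = c
  rw [hf]
  refine ext_inner_right ℝ fun v => ?_
  rw [InnerProductSpace.toDual_symm_apply]
  simp only [innerSL_apply_apply]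

lemma Standing.fenchel (h : Standing Ω₀ Ω₁ ρ₀ ρ₁ g) {x : Euc d} (hx : x ∈ Ω₀) :
    lconj g x = ⟪x, gradient (lconj g) x⟫ - g (gradient (lconj g) x) ∧
      gradient g (gradient (lconj g) x) = x := by
  obtain ⟨r', hr'0, hball⟩ := Metric.isOpen_iff.mp h.open₀ x hx
  set r := r' / 2 with hrdef
  have hr0 : 0 < r := by positivity
  set B := Metric.closedBall x r with hB
  have hBΩ : B ⊆ Ω₀ := by
    refine fun w hw => hball ?_
    have := mem_closedBall.mp hw
    exact mem_ball.mpr (lt_of_le_of_lt this (by rw [hrdef]; linarith))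
  have hxB : x ∈ B := mem_closedBall_self hr0.le
  -- upper bound for lconj g on B
  obtain ⟨M, hM⟩ : BddAbove (lconj g '' B) :=
    (isCompact_closedBall x r).bddAbove_image (h.conjsmooth.continuousOn.mono hBΩ)
  have hMB : ∀ w ∈ B, lconj g w ≤ M := fun w hw => hM ⟨w, hw, rfl⟩
  -- Fenchel inequality
  have hfen : ∀ w ∈ Ω₀, ∀ z : Euc d, ⟪w, z⟫ - g z ≤ lconj g w := fun w hw z =>
    le_csSup (h.bddAbove_conj w hw) ⟨z, rfl⟩
  -- minimizing sequence
  have hminseq : ∀ n : ℕ, ∃ z : Euc d, lconj g x - 1 / (n + 1) < ⟪x, z⟫ - g z := by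
    intro n
    have hlt : lconj g x - 1 / ((n:ℝ) + 1) < sSup (Set.range fun y => ⟪x, y⟫ - g y) := by
      have h1 : (0:ℝ) < 1 / ((n:ℝ) + 1) := by positivity
      have : lconj g x = sSup (Set.range fun y => ⟪x, y⟫ - g y) := rfl
      linarith [this]
    obtain ⟨a, ⟨z, rfl⟩, ha⟩ := exists_lt_of_lt_csSup (Set.range_nonempty _) hlt
    exact ⟨z, ha⟩
  choose y hy using hminseq
  -- boundedness of the minimizing sequence
  have hφxM : lconj g x ≤ M := hMB x hxB
  have hbd : ∀ n, ‖y n‖ ≤ (M - lconj g x + 1) / r := by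
    intro n
    rcases eq_or_ne (y n) 0 with h0 | h0
    · rw [h0, norm_zero]
      apply div_nonneg (by linarith) hr0.le
    · set u := ‖y n‖⁻¹ • y n with hu
      have hyn0 : (0:ℝ) < ‖y n‖ := norm_pos_iff.mpr h0
      have hun : ‖u‖ = 1 := by
        rw [hu, norm_smul, norm_inv, norm_norm, inv_mul_cancel₀ hyn0.ne']
      have hwB : x + r • u ∈ B := by
        rw [hB, mem_closedBall]
        have : dist (x + r • u) x = ‖r • u‖ := by
          rw [dist_eq_norm]; congr 1; abel
        rw [this, norm_smul, hun, mul_one, Real.norm_eq_abs, abs_of_pos hr0]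
      have h1 : ⟪x + r • u, y n⟫ - g (y n) ≤ M :=
        le_trans (hfen _ (hBΩ hwB) (y n)) (hMB _ hwB)
      have h2 : ⟪x + r • u, y n⟫ = ⟪x, y n⟫ + r * ‖y n‖ := by
        rw [inner_add_left, real_inner_smul_left]
        congr 1
        rw [hu, real_inner_smul_left, real_inner_self_eq_norm_sq]
        field_simp
      have h3 := hy n
      have h4 : (1:ℝ) / ((n:ℝ) + 1) ≤ 1 := by
        rw [div_le_one (by positivity)]
        linarith [Nat.cast_nonneg (α := ℝ) n]
      rw [le_div_iff₀ hr0, mul_comm]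
      linarith
  set R := (M - lconj g x + 1) / r with hR
  have hyR : ∀ n, y n ∈ Metric.closedBall (0 : Euc d) R := by
    intro n
    rw [mem_closedBall, dist_zero_right]
    exact hbd n
  obtain ⟨zbar, hzbarmem, ψ, hψmono, hψtend⟩ :=
    (isCompact_closedBall (0 : Euc d) R).tendsto_subseq hyR
  -- value convergence
  have hterm : Tendsto (fun n => ⟪x, y n⟫ - g (y n)) atTop (𝓝 (lconj g x)) := by
    refine tendsto_of_tendsto_of_tendsto_of_le_of_le
      (f := fun n => ⟪x, y n⟫ - g (y n))
      (g := fun n : ℕ => lconj g x - 1 / ((n:ℝ) + 1)) (h := fun _ => lconj g x)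
      ?_ tendsto_const_nhds (fun n => (hy n).le) (fun n => hfen x hx (y n))
    have : Tendsto (fun n : ℕ => 1 / ((n:ℝ) + 1)) atTop (𝓝 0) :=
      tendsto_one_div_add_atTop_nhds_zero_nat
    have h5 : Tendsto (fun n : ℕ => lconj g x - 1 / ((n:ℝ) + 1)) atTop
        (𝓝 (lconj g x - 0)) := tendsto_const_nhds.sub this
    simpa using h5
  have htermsub : Tendsto (fun k => ⟪x, y (ψ k)⟫ - g (y (ψ k))) atTop (𝓝 (lconj g x)) :=
    hterm.comp hψmono.tendsto_atTop
  -- subgradient inequality on B for the limit point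
  have hcontact : ∀ w ∈ B, lconj g x + ⟪w - x, zbar⟫ ≤ lconj g w := by
    intro w hw
    have hk : ∀ k, ⟪w - x, y (ψ k)⟫ + (⟪x, y (ψ k)⟫ - g (y (ψ k))) ≤ lconj g w := by
      intro k
      have h6 := hfen w (hBΩ hw) (y (ψ k))
      have e : ⟪w - x, y (ψ k)⟫ + (⟪x, y (ψ k)⟫ - g (y (ψ k)))
          = ⟪w, y (ψ k)⟫ - g (y (ψ k)) := by
        rw [inner_sub_left]; ring
      rw [e]
      exact h6
    have htend : Tendsto (fun k => ⟪w - x, y (ψ k)⟫ + (⟪x, y (ψ k)⟫ - g (y (ψ k))))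
        atTop (𝓝 (⟪w - x, zbar⟫ + lconj g x)) := by
      refine Tendsto.add ?_ htermsub
      have hcont : Continuous fun u : Euc d => ⟪w - x, u⟫ :=
        continuous_const.inner continuous_id
      exact (hcont.tendsto zbar).comp hψtend
    have := le_of_tendsto htend (Filter.Eventually.of_forall hk)
    linarith
  -- identify the limit point with the gradient
  have hzbar : gradient (lconj g) x = zbar := by
    have hmin : IsLocalMin (fun w => lconj g w - ⟪w, zbar⟫) x := by
      filter_upwards [closedBall_mem_nhds x hr0] with w hw
      have h7 := hcontact w hw
      have e : ⟪w - x, zbar⟫ = ⟪w, zbar⟫ - ⟪x, zbar⟫ := by rw [inner_sub_left]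
      show lconj g x - ⟪x, zbar⟫ ≤ lconj g w - ⟪w, zbar⟫
      linarith
    have hdφ : DifferentiableAt ℝ (lconj g) x :=
      (h.conjsmooth.differentiableOn (by norm_num)).differentiableAt (h.open₀.mem_nhds hx)
    have hdξ : HasFDerivAt (fun w => lconj g w - ⟪w, zbar⟫)
        (fderiv ℝ (lconj g) x - innerSL ℝ zbar) x :=
      hdφ.hasFDerivAt.sub (hasFDerivAt_inner_const' zbar x)
    have h0 := hmin.fderiv_eq_zero
    rw [hdξ.fderiv] at h0
    have h1 : fderiv ℝ (lconj g) x = innerSL ℝ zbar := by rwa [sub_eq_zero] at h0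
    exact grad_eq_of_fderiv_eq_innerSL h1
  have hTmem : gradient (lconj g) x ∈ Ω₁ := h.grad_mem x hx
  have hψtend' : Tendsto (fun k => y (ψ k)) atTop (𝓝 (gradient (lconj g) x)) := by
    rw [hzbar]; exact hψtend
  -- attainment of the sup at the gradient
  have hgt : Tendsto (fun k => g (y (ψ k))) atTop (𝓝 (g (gradient (lconj g) x))) := by
    have hgc : ContinuousAt g (gradient (lconj g) x) :=
      h.gsmooth.continuousOn.continuousAt (h.open₁.mem_nhds hTmem)
    exact hgc.tendsto.comp hψtend'
  have hterm2 : Tendsto (fun k => ⟪x, y (ψ k)⟫ - g (y (ψ k)))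
      atTop (𝓝 (⟪x, gradient (lconj g) x⟫ - g (gradient (lconj g) x))) := by
    refine Tendsto.sub ?_ hgt
    have hcont : Continuous fun u : Euc d => ⟪x, u⟫ := continuous_const.inner continuous_id
    exact (hcont.tendsto _).comp hψtend'
  have hI : lconj g x = ⟪x, gradient (lconj g) x⟫ - g (gradient (lconj g) x) :=
    tendsto_nhds_unique htermsub hterm2
  refine ⟨hI, ?_⟩
  -- the gradient of g at the maximizer is x
  have hglob : ∀ z : Euc d, g (gradient (lconj g) x) - ⟪x, gradient (lconj g) x⟫
      ≤ g z - ⟪x, z⟫ := by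
    intro z
    have := hfen x hx z
    linarith [hI]
  have hminz : IsLocalMin (fun z => g z - ⟪x, z⟫) (gradient (lconj g) x) :=
    Filter.Eventually.of_forall hglob
  have hdg : DifferentiableAt ℝ g (gradient (lconj g) x) :=
    (h.gsmooth.differentiableOn (by norm_num)).differentiableAt (h.open₁.mem_nhds hTmem)
  have hdζ : HasFDerivAt (fun z => g z - ⟪x, z⟫)
      (fderiv ℝ g (gradient (lconj g) x) - innerSL ℝ x) (gradient (lconj g) x) :=
    hdg.hasFDerivAt.sub (hasFDerivAt_inner_left x _)
  have h0 := hminz.fderiv_eq_zero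
  rw [hdζ.fderiv] at h0
  have h1 : fderiv ℝ g (gradient (lconj g) x) = innerSL ℝ x := by rwa [sub_eq_zero] at h0
  exact grad_eq_of_fderiv_eq_innerSL h1

end StandingLemmas

/-- Lemma 2.3, first part: the set where `C_ε(x) ≥ D(x, ∇g*(x'))` concentrates on the
diagonal at rate `ε^{1/(d+2)}`. -/
theorem support_concentration {d : ℕ} {Ω₀ Ω₁ : Set (Euc d)} {ρ₀ ρ₁ g : Euc d → ℝ}
    (h : Standing Ω₀ Ω₁ ρ₀ ρ₁ g) :
    ∃ C > (0 : ℝ), ∃ ε₀ > (0 : ℝ), ∀ ε : ℝ, 0 < ε → ε ≤ ε₀ →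
      ∀ x ∈ Ω₀, ∀ x' ∈ Ω₀, breg g x (gradient (lconj g) x') ≤ CepsF ρ₀ ρ₁ g ε x →
        ‖x - x'‖ ≤ C * ε ^ ((1 : ℝ) / ((d : ℝ) + 2)) := by
  obtain ⟨lb, ub, hlb0, hlbub, hb₀, hb₁⟩ := h.bounds
  obtain ⟨σm, σM, hσm0, hσmM, hσ⟩ := h.ghess
  have hσM0 : 0 < σM := lt_of_lt_of_le hσm0 hσmM
  set K := CdC d ^ (-(2:ℝ) / ((d:ℝ) + 2)) * (lb * lb) ^ (-(1:ℝ) / ((d:ℝ) + 2)) with hKdef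
  have hCd0 : 0 ≤ CdC d := by
    rw [CdC]
    apply div_nonneg
    · apply mul_nonneg (by positivity)
      rw [sphArea]; exact ENNReal.toReal_nonneg
    · positivity
  have hK0 : 0 ≤ K :=
    mul_nonneg (Real.rpow_nonneg hCd0 _) (Real.rpow_nonneg (by positivity) _)
  refine ⟨σM * Real.sqrt (2 * K / σm) + 1, by positivity, 1, one_pos, ?_⟩
  intro ε hε0 hε1 x hx x' hx' hprem
  set y := gradient (lconj g) x with hydef
  set y' := gradient (lconj g) x' with hy'def
  have hyΩ : y ∈ Ω₁ := h.grad_mem x hx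
  have hy'Ω : y' ∈ Ω₁ := h.grad_mem x' hx'
  obtain ⟨hI, hII⟩ := h.fenchel hx
  obtain ⟨hI', hII'⟩ := h.fenchel hx'
  rw [← hydef] at hI hII
  rw [← hy'def] at hI' hII'
  have hσ' : ∀ z ∈ Ω₁, ∀ v : Euc d, σm * ‖v‖ ^ 2 ≤ ⟪v, fderiv ℝ (gradient g) z v⟫ := by
    intro z hz v
    have := (hσ z hz v).1
    rwa [hessQ] at this
  have hsc := strong_conv h.gconv.1 h.open₁ h.gsmooth hσ' hyΩ hy'Ω
  rw [hII] at hsc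
  have hbreg : breg g x y' = g y' - g y - ⟪x, y' - y⟫ := by
    rw [breg, hI, inner_sub_right]
    ring
  have hql : σm / 2 * ‖y' - y‖ ^ 2 ≤ CepsF ρ₀ ρ₁ g ε x := by
    rw [hbreg] at hprem
    have e : ⟪x, y' - y⟫ = ⟪gradient g y, y' - y⟫ := by rw [hII]
    linarith [hsc, e]
  have hρ₁y : lb ≤ ρ₁ y := (hb₁ y hyΩ).1
  have hρ₀x : lb ≤ ρ₀ x := (hb₀ x hx).1
  have hbase : lb * lb ≤ ρ₀ x * ρ₁ y :=
    mul_le_mul hρ₀x hρ₁y hlb0.le (le_trans hlb0.le hρ₀x)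
  have hexp : -(1:ℝ) / ((d:ℝ) + 2) ≤ 0 := by
    have hd2 : (0:ℝ) ≤ (d:ℝ) + 2 := by positivity
    exact div_nonpos_of_nonpos_of_nonneg (by norm_num) hd2
  have hrpow : (ρ₀ x * ρ₁ y) ^ (-(1:ℝ) / ((d:ℝ) + 2))
      ≤ (lb * lb) ^ (-(1:ℝ) / ((d:ℝ) + 2)) :=
    Real.rpow_le_rpow_of_nonpos (by positivity) hbase hexp
  have hceps : CepsF ρ₀ ρ₁ g ε x ≤ ε ^ ((2:ℝ) / ((d:ℝ) + 2)) * K := by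
    rw [CepsF, hKdef, ← mul_assoc]
    refine mul_le_mul_of_nonneg_left ?_ ?_
    · rw [← hydef]; exact hrpow
    · exact mul_nonneg (Real.rpow_nonneg hε0.le _) (Real.rpow_nonneg hCd0 _)
  set β := ε ^ ((1:ℝ) / ((d:ℝ) + 2)) with hβdef
  have hβ0 : 0 ≤ β := Real.rpow_nonneg hε0.le _
  have hε2 : ε ^ ((2:ℝ) / ((d:ℝ) + 2)) = β ^ 2 := by
    rw [hβdef, ← Real.rpow_natCast (ε ^ ((1:ℝ) / ((d:ℝ) + 2))) 2,
      ← Real.rpow_mul hε0.le]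
    congr 1
    push_cast
    ring
  have h8 : σm / 2 * ‖y' - y‖ ^ 2 ≤ β ^ 2 * K := by
    rw [← hε2]
    exact le_trans hql hceps
  have hyy' : ‖y' - y‖ ^ 2 ≤ (2 * K / σm) * β ^ 2 := by
    have h10 : ‖y' - y‖ ^ 2 = (2 / σm) * (σm / 2 * ‖y' - y‖ ^ 2) := by
      field_simp
    rw [h10]
    calc (2 / σm) * (σm / 2 * ‖y' - y‖ ^ 2) ≤ (2 / σm) * (β ^ 2 * K) :=
          mul_le_mul_of_nonneg_left h8 (by positivity)
      _ = (2 * K / σm) * β ^ 2 := by ring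
  have hnorm : ‖y' - y‖ ≤ Real.sqrt (2 * K / σm) * β := by
    have h9 : Real.sqrt (‖y' - y‖ ^ 2) ≤ Real.sqrt ((2 * K / σm) * β ^ 2) :=
      Real.sqrt_le_sqrt hyy'
    rw [Real.sqrt_sq (norm_nonneg _), Real.sqrt_mul (by positivity) (β ^ 2),
      Real.sqrt_sq hβ0] at h9
    exact h9
  have hsym : ∀ z ∈ Ω₁, ∀ v w : Euc d,
      ⟪w, fderiv ℝ (gradient g) z v⟫ = ⟪v, fderiv ℝ (gradient g) z w⟫ :=
    fun z hz v w => hess_symm h.gsmooth h.open₁ hz v w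
  have hσpair : ∀ z ∈ Ω₁, ∀ v : Euc d,
      σm * ‖v‖ ^ 2 ≤ ⟪v, fderiv ℝ (gradient g) z v⟫ ∧
      ⟪v, fderiv ℝ (gradient g) z v⟫ ≤ σM * ‖v‖ ^ 2 := by
    intro z hz v
    have := hσ z hz v
    rwa [hessQ] at this
  have hlip := grad_lipschitz h.gconv.1 h.open₁ h.gsmooth hσm0.le hσmM hsym hσpair hyΩ hy'Ω
  rw [hII, hII'] at hlip
  have hfinal : ‖x - x'‖ ≤ σM * (Real.sqrt (2 * K / σm) * β) := by
    refine le_trans hlip ?_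
    refine mul_le_mul_of_nonneg_left ?_ hσM0.le
    rw [norm_sub_rev]
    exact hnorm
  calc ‖x - x'‖ ≤ σM * Real.sqrt (2 * K / σm) * β := by
        rw [mul_assoc]; exact hfinal
    _ ≤ (σM * Real.sqrt (2 * K / σm) + 1) * β := by nlinarith [hβ0]
end
end

section
/- Under the standing assumptions, let s: Ω → [a,b] with 0 < a < b < ∞ be a given function, where Ω ⊂ Ω₀ is an open set satisfying the interior cone condition (there exist r₀ > 0 and θ ∈ (0,π) such that every x ∈ Ω is the vertex of a cone of height r₀ and opening angle θ contained in Ω). Then for each ε > 0 there exists a function ψ_ε: Ω → ℝ such that s(x) = (1/ε) ∫_Ω ( ψ_ε(x) − D(x, ∇g*(x')) )_+ dρ₀(x') for all x ∈ Ω. -/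
open MeasureTheory Filter Set Metric Bornology
open scoped RealInnerProductSpace ENNReal NNReal Topology

noncomputable section

/-- A convex function that is continuous on an open bounded convex set is bounded below there. -/
lemma convexOn_bddBelow_aux {d : ℕ} {s : Set (Euc d)} {g : Euc d → ℝ}
    (ho : IsOpen s) (hb : IsBounded s) (hne : s.Nonempty)
    (hc : ConvexOn ℝ s g) (hcont : ContinuousOn g s) :
    ∃ m : ℝ, ∀ y ∈ s, m ≤ g y := by
  obtain ⟨y₀, hy₀⟩ := hne
  obtain ⟨r, hr, hball⟩ := Metric.isOpen_iff.mp ho y₀ hy₀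
  obtain ⟨R, hR0, hR⟩ := hb.subset_closedBall_lt 0 y₀
  have hKsub : Metric.closedBall y₀ (r / 2) ⊆ s :=
    (Metric.closedBall_subset_ball (by linarith)).trans hball
  obtain ⟨z, hzK, hzmax⟩ := (isCompact_closedBall y₀ (r / 2)).exists_isMaxOn
    ⟨y₀, Metric.mem_closedBall_self (by linarith)⟩ (hcont.mono hKsub)
  set c : ℝ := r / (2 * R) with hcdef
  have hcpos : 0 < c := by positivity
  have h1c : (0 : ℝ) < 1 + c := by linarith
  refine ⟨(g y₀ - (1 / (1 + c)) * g z) / (c / (1 + c)), fun y hy => ?_⟩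
  set w : Euc d := y₀ + c • (y₀ - y) with hwdef
  have hwK : w ∈ Metric.closedBall y₀ (r / 2) := by
    have hyR : dist y y₀ ≤ R := Metric.mem_closedBall.mp (hR hy)
    have : dist w y₀ = c * ‖y₀ - y‖ := by
      rw [hwdef, dist_eq_norm, add_sub_cancel_left, norm_smul, Real.norm_eq_abs,
        abs_of_pos hcpos]
    rw [Metric.mem_closedBall, this]
    have h2 : ‖y₀ - y‖ ≤ R := by rwa [← dist_eq_norm, dist_comm]
    calc c * ‖y₀ - y‖ ≤ c * R := by nlinarith
      _ = r / 2 := by rw [hcdef]; field_simp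
  have hws : w ∈ s := hKsub hwK
  have hcc : (c / (1 + c)) • y + (1 / (1 + c)) • w = y₀ := by
    rw [hwdef]
    match_scalars <;> field_simp <;> ring
  have hconv := hc.2 hy hws (by positivity : (0:ℝ) ≤ c / (1 + c))
    (by positivity : (0:ℝ) ≤ 1 / (1 + c)) (by field_simp; ring)
  rw [hcc] at hconv
  simp only [smul_eq_mul] at hconv
  have hwz : g w ≤ g z := hzmax hwK
  have hapos : (0:ℝ) < c / (1 + c) := by positivity
  rw [div_le_iff₀ hapos]
  have hb' : (0:ℝ) ≤ 1 / (1 + c) := by positivity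
  have hcm : g y * (c / (1 + c)) = (c / (1 + c)) * g y := mul_comm _ _
  nlinarith [mul_le_mul_of_nonneg_left hwz hb']

/-- If `densM Ω ρ` vanishes on a measurable set and `ρ ≥ lb > 0` on `Ω`,
then the set is `volume.restrict Ω`-null. -/
lemma restrict_null_of_densM_null {d : ℕ} {Ω : Set (Euc d)} {ρ : Euc d → ℝ} {lb : ℝ}
    (hΩ : MeasurableSet Ω) (hlb : 0 < lb) (hρ : ∀ x ∈ Ω, lb ≤ ρ x)
    (hρm : AEMeasurable ρ (volume.restrict Ω))
    {s : Set (Euc d)} (hs : MeasurableSet s) (h0 : densM Ω ρ s = 0) :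
    volume.restrict Ω s = 0 := by
  rw [densM, withDensity_apply _ hs] at h0
  have hm : AEMeasurable (fun x => ENNReal.ofReal (ρ x)) ((volume.restrict Ω).restrict s) :=
    ENNReal.measurable_ofReal.comp_aemeasurable hρm.restrict
  rw [lintegral_eq_zero_iff' hm] at h0
  have h1 : ∀ᵐ x' ∂((volume.restrict Ω).restrict s), x' ∈ Ω :=
    ae_restrict_of_ae (ae_restrict_mem hΩ)
  have hF : ∀ᵐ x' ∂((volume.restrict Ω).restrict s), False := by
    filter_upwards [h0, h1] with y hy0 hyΩ
    have h2 := hρ y hyΩ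
    simp only [Pi.zero_apply, ENNReal.ofReal_eq_zero] at hy0
    linarith
  have : ((volume.restrict Ω).restrict s) Set.univ = 0 := by
    have := ae_iff.mp hF
    simpa using this
  rwa [Measure.restrict_apply_univ] at this


set_option maxHeartbeats 1000000 in
/-- Lemma 4.1, point 1: existence of the fitted potential `ψ_ε`. -/
theorem exists_fitted_potential {d : ℕ} {Ω₀ Ω₁ : Set (Euc d)} {ρ₀ ρ₁ g : Euc d → ℝ}
    (h : Standing Ω₀ Ω₁ ρ₀ ρ₁ g)
    (Ω : Set (Euc d)) (hsub : Ω ⊆ Ω₀) (hopen : IsOpen Ω)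
    (hcone : ∃ r₀ > (0 : ℝ), ∃ θ ∈ Set.Ioo (0 : ℝ) Real.pi, otConeCond Ω r₀ θ)
    (a b : ℝ) (ha : 0 < a) (hab : a < b)
    (s : Euc d → ℝ) (hs : ∀ x ∈ Ω, s x ∈ Set.Icc a b) :
    ∀ ε > (0 : ℝ), ∃ ψ : Euc d → ℝ, ∀ x ∈ Ω,
      s x = (1 / ε) *
        ∫ x' in Ω, max (ψ x - breg g x (gradient (lconj g) x')) 0 * ρ₀ x' := by
  intro ε hε
  rcases Set.eq_empty_or_nonempty Ω with hΩe | hΩne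
  · exact ⟨0, by simp [hΩe]⟩
  obtain ⟨lb, ub, hlb, hlbub, hρ₀b, hρ₁b⟩ := h.bounds
  obtain ⟨β, hβ, Cβ, hH₀, hH₁⟩ := h.holder
  have hρ₀c : ContinuousOn ρ₀ (closure Ω₀) := hH₀.continuousOn hβ
  set T : Euc d → Euc d := gradient (lconj g) with hTdef
  have hT : Measurable T := by
    have h1 : Measurable (fderiv ℝ (lconj g)) := measurable_fderiv ℝ _
    exact ((InnerProductSpace.toDual ℝ (Euc d)).symm.continuous.measurable).comp h1
  have hΩm : MeasurableSet Ω := hopen.measurableSet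
  have hΩbdd : IsBounded Ω := h.bdd₀.subset hsub
  haveI hfin : IsFiniteMeasure (volume.restrict Ω) :=
    ⟨by rw [Measure.restrict_apply_univ]; exact hΩbdd.measure_lt_top⟩
  -- Ω₁ is nonempty
  have hΩ₁ne : Ω₁.Nonempty := by
    by_contra hne
    rw [Set.not_nonempty_iff_eq_empty] at hne
    have h1 := h.prob₁.measure_univ
    rw [densM, hne, Measure.restrict_empty] at h1
    rw [withDensity_apply _ MeasurableSet.univ, Measure.restrict_zero,
      lintegral_zero_measure] at h1
    exact zero_ne_one h1
  -- bound on the norm of points of Ω₁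
  obtain ⟨R₁, hR₁⟩ := h.bdd₁.subset_closedBall 0
  have hnormΩ₁ : ∀ y ∈ Ω₁, ‖y‖ ≤ R₁ := fun y hy =>
    mem_closedBall_zero_iff.mp (hR₁ hy)
  -- g is bounded below on Ω₁
  obtain ⟨m, hm⟩ := convexOn_bddBelow_aux h.open₁ h.bdd₁ hΩ₁ne h.gconv
    h.gsmooth.continuousOn
  -- measurability of ρ₀ on Ω and Ω₀
  have hρ₀m : AEMeasurable ρ₀ (volume.restrict Ω) :=
    (hρ₀c.mono ((hsub.trans subset_closure))).aemeasurable hΩm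
  have hρ₀m' : AEMeasurable ρ₀ (volume.restrict Ω₀) :=
    (hρ₀c.mono subset_closure).aemeasurable h.open₀.measurableSet
  -- absolute continuity of the image measure
  have hac : (volume.restrict Ω).map T ≪ volume.restrict Ω₁ := by
    refine Measure.AbsolutelyContinuous.mk (fun u hu h0 => ?_)
    rw [Measure.map_apply hT hu]
    have h1 : densM Ω₁ ρ₁ u = 0 := by
      rw [densM, withDensity_apply _ hu, Measure.restrict_eq_zero.mpr h0,
        lintegral_zero_measure]
    have h2 : densM Ω₀ ρ₀ (T ⁻¹' u) = 0 := by
      rw [← h.conjpush, Measure.map_apply hT hu] at h1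
      exact h1
    have h3 : volume.restrict Ω₀ (T ⁻¹' u) = 0 :=
      restrict_null_of_densM_null h.open₀.measurableSet hlb (fun x hx => (hρ₀b x hx).1)
        hρ₀m' (hT hu) h2
    rw [Measure.restrict_apply (hT hu)] at h3 ⊢
    exact measure_mono_null (Set.inter_subset_inter_right _ hsub) h3
  -- a.e., T maps into Ω₁
  have hT1 : ∀ᵐ x' ∂(volume.restrict Ω), T x' ∈ Ω₁ := by
    have h0 : (volume.restrict Ω).map T Ω₁ᶜ = 0 := by
      apply hac
      rw [Measure.restrict_apply h.open₁.measurableSet.compl]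
      simp
    rw [Measure.map_apply hT h.open₁.measurableSet.compl] at h0
    refine ae_iff.mpr ?_
    exact h0
  have hmem : ∀ᵐ x' ∂(volume.restrict Ω), x' ∈ Ω := ae_restrict_mem hΩm
  have hμpos : (volume.restrict Ω) Set.univ ≠ 0 := by
    rw [Measure.restrict_apply_univ]
    exact (hopen.measure_pos volume hΩne).ne'
  -- the key pointwise claim
  have key : ∀ x ∈ Ω, ∃ t : ℝ,
      s x = (1 / ε) * ∫ x' in Ω, max (t - breg g x (T x')) 0 * ρ₀ x' := by
    intro x hx
    set f : Euc d → ℝ := fun x' => breg g x (T x') with hfdef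
    have hfae : AEMeasurable f (volume.restrict Ω) := by
      have hgm : AEMeasurable (fun y => breg g x y) (volume.restrict Ω₁) := by
        have hg1 : AEMeasurable g (volume.restrict Ω₁) :=
          h.gsmooth.continuousOn.aemeasurable h.open₁.measurableSet
        have hinner : Continuous fun y : Euc d => (inner ℝ x y : ℝ) :=
          continuous_const.inner continuous_id
        simp only [breg]
        exact (aemeasurable_const.add hg1).sub hinner.aemeasurable
      exact (hgm.mono_ac hac).comp_measurable hT
    set ftil : Euc d → ℝ := hfae.mk f with hftdef
    have hftm : Measurable ftil := hfae.measurable_mk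
    have heq : f =ᵐ[volume.restrict Ω] ftil := hfae.ae_eq_mk
    -- a.e. lower bound on f̃
    set L : ℝ := lconj g x + m - ‖x‖ * R₁ with hLdef
    have hflb : ∀ᵐ x' ∂(volume.restrict Ω), L ≤ ftil x' := by
      filter_upwards [hT1, heq] with x' h1 h2
      rw [← h2]
      have hg := hm _ h1
      have hnorm := hnormΩ₁ _ h1
      have hip : (inner ℝ x (T x') : ℝ) ≤ ‖x‖ * R₁ :=
        (real_inner_le_norm x (T x')).trans
          (mul_le_mul_of_nonneg_left hnorm (norm_nonneg x))
      simp only [hfdef, breg]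
      linarith
    -- integrability
    have hInt : ∀ t : ℝ, Integrable (fun x' => max (t - ftil x') 0 * ρ₀ x')
        (volume.restrict Ω) := by
      intro t
      have hmeas : AEStronglyMeasurable (fun x' => max (t - ftil x') 0 * ρ₀ x')
          (volume.restrict Ω) :=
        (((measurable_const.sub hftm).max measurable_const).aemeasurable.mul
          hρ₀m).aestronglyMeasurable
      refine Integrable.mono' (integrable_const (max (t - L) 0 * ub)) hmeas ?_
      filter_upwards [hflb, hmem] with x' h1 h2
      have hρnn : 0 ≤ ρ₀ x' := hlb.le.trans (hρ₀b x' (hsub h2)).1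
      rw [Real.norm_eq_abs, abs_of_nonneg (mul_nonneg (le_max_right _ _) hρnn)]
      exact mul_le_mul (max_le_max (by linarith) le_rfl) (hρ₀b x' (hsub h2)).2 hρnn
        (le_max_right _ _)
    set I : ℝ → ℝ := fun t => ∫ x' in Ω, max (t - ftil x') 0 * ρ₀ x' with hIdef
    set V : ℝ := ((volume.restrict Ω) Set.univ).toReal with hVdef
    have hVnn : 0 ≤ V := ENNReal.toReal_nonneg
    -- Lipschitz estimate
    have hILip : ∀ t₁ t₂ : ℝ, |I t₁ - I t₂| ≤ ub * V * |t₁ - t₂| := by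
      intro t₁ t₂
      have hsubint : I t₁ - I t₂ = ∫ x' in Ω,
          (max (t₁ - ftil x') 0 * ρ₀ x' - max (t₂ - ftil x') 0 * ρ₀ x') :=
        (integral_sub (hInt t₁) (hInt t₂)).symm
      rw [hsubint]
      have h1 : ∀ᵐ x' ∂(volume.restrict Ω),
          ‖max (t₁ - ftil x') 0 * ρ₀ x' - max (t₂ - ftil x') 0 * ρ₀ x'‖ ≤
            |t₁ - t₂| * ub := by
        filter_upwards [hmem] with x' h2
        have hρnn : 0 ≤ ρ₀ x' := hlb.le.trans (hρ₀b x' (hsub h2)).1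
        rw [Real.norm_eq_abs, ← sub_mul, abs_mul, abs_of_nonneg hρnn]
        have h3 : |max (t₁ - ftil x') 0 - max (t₂ - ftil x') 0| ≤ |t₁ - t₂| := by
          have := abs_max_sub_max_le_abs (t₁ - ftil x') (t₂ - ftil x') 0
          simpa using this
        exact mul_le_mul h3 (hρ₀b x' (hsub h2)).2 hρnn (abs_nonneg _)
      calc |∫ x' in Ω, (max (t₁ - ftil x') 0 * ρ₀ x' - max (t₂ - ftil x') 0 * ρ₀ x')|
          ≤ ∫ x' in Ω, ‖max (t₁ - ftil x') 0 * ρ₀ x' - max (t₂ - ftil x') 0 * ρ₀ x'‖ := by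
            rw [← Real.norm_eq_abs]
            exact norm_integral_le_integral_norm _
        _ ≤ ∫ _x' in Ω, |t₁ - t₂| * ub :=
            integral_mono_ae ((hInt t₁).sub (hInt t₂)).norm (integrable_const _) h1
        _ = V * (|t₁ - t₂| * ub) := by rw [integral_const]; simp [hVdef]; exact Or.inl rfl
        _ = ub * V * |t₁ - t₂| := by ring
    have hIcont : Continuous I := by
      have hK : (0:ℝ) ≤ ub * V := mul_nonneg (hlb.le.trans hlbub) hVnn
      refine LipschitzWith.continuous (K := ⟨ub * V, hK⟩)
        (LipschitzWith.of_dist_le_mul fun t₁ t₂ => ?_)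
      rw [Real.dist_eq, Real.dist_eq]; exact hILip t₁ t₂
    -- I L = 0
    have hI0 : I L = 0 := by
      have : (fun x' => max (L - ftil x') 0 * ρ₀ x') =ᵐ[volume.restrict Ω]
          (fun _ => (0:ℝ)) := by
        filter_upwards [hflb] with x' h1
        rw [max_eq_right (by linarith), zero_mul]
      rw [hIdef]
      simp only
      rw [integral_congr_ae this, integral_zero]
    -- a set of positive measure where f̃ is bounded above
    set A : ℕ → Set (Euc d) := fun n => ftil ⁻¹' (Set.Iic (n : ℝ)) with hAdef
    have hAm : ∀ n, MeasurableSet (A n) := fun n => hftm measurableSet_Iic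
    obtain ⟨N, hN⟩ : ∃ n : ℕ, (volume.restrict Ω) (A n) ≠ 0 := by
      by_contra hcon
      push_neg at hcon
      have hcover : (⋃ n : ℕ, A n) = Set.univ := by
        ext x'
        simp only [Set.mem_iUnion, Set.mem_univ, iff_true, hAdef, Set.mem_preimage,
          Set.mem_Iic]
        exact exists_nat_ge (ftil x')
      have : (volume.restrict Ω) Set.univ = 0 := by
        rw [← hcover]
        exact measure_iUnion_null hcon
      exact hμpos this
    set cA : ℝ := ((volume.restrict Ω) (A N)).toReal with hcAdef
    have hcA : 0 < cA := ENNReal.toReal_pos hN (measure_ne_top _ _)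
    have hlbcA : 0 < lb * cA := mul_pos hlb hcA
    -- the right endpoint
    set Tt : ℝ := max L N + (ε * b) / (lb * cA) + 1 with hTtdef
    have hTtN : (N : ℝ) ≤ Tt := by
      have h1 : (N:ℝ) ≤ max L N := le_max_right _ _
      have h2 : 0 ≤ (ε * b) / (lb * cA) :=
        div_nonneg (mul_nonneg hε.le (by linarith)) hlbcA.le
      rw [hTtdef]; linarith
    have hLTt : L ≤ Tt := by
      have h1 : L ≤ max L N := le_max_left _ _
      have h2 : 0 ≤ (ε * b) / (lb * cA) :=
        div_nonneg (mul_nonneg hε.le (by linarith)) hlbcA.le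
      rw [hTtdef]; linarith
    -- lower bound for I Tt
    have hITt : ε * b ≤ I Tt := by
      have hind : Integrable ((A N).indicator fun _ => (Tt - N) * lb)
          (volume.restrict Ω) := (integrable_const _).indicator (hAm N)
      have hmono : ((A N).indicator fun _ => (Tt - N) * lb) ≤ᵐ[volume.restrict Ω]
          (fun x' => max (Tt - ftil x') 0 * ρ₀ x') := by
        filter_upwards [hmem] with x' h2
        have hρnn : 0 ≤ ρ₀ x' := hlb.le.trans (hρ₀b x' (hsub h2)).1
        by_cases hxA : x' ∈ A N
        · rw [Set.indicator_of_mem hxA]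
          have h3 : ftil x' ≤ N := hxA
          have h4 : Tt - N ≤ max (Tt - ftil x') 0 :=
            le_trans (by linarith) (le_max_left _ _)
          exact mul_le_mul h4 (hρ₀b x' (hsub h2)).1 hlb.le
            (le_trans (by linarith) h4)
        · rw [Set.indicator_of_notMem hxA]
          exact mul_nonneg (le_max_right _ _) hρnn
      have h5 : ∫ x' in Ω, ((A N).indicator fun _ => (Tt - N) * lb) x' =
          cA * ((Tt - N) * lb) := by
        rw [integral_indicator_const _ (hAm N), smul_eq_mul]; rfl
      have h6 := integral_mono_ae hind (hInt Tt) hmono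
      rw [h5] at h6
      refine le_trans ?_ h6
      have h7 : (ε * b) / (lb * cA) + 1 ≤ Tt - N := by
        have : (N:ℝ) ≤ max L N := le_max_right _ _
        rw [hTtdef]; linarith
      calc ε * b = (ε * b) / (lb * cA) * (lb * cA) := by
            field_simp
        _ ≤ ((ε * b) / (lb * cA) + 1) * (lb * cA) := by nlinarith
        _ ≤ (Tt - N) * (lb * cA) := by nlinarith
        _ = cA * ((Tt - N) * lb) := by ring
    -- intermediate value theorem
    have hsx := hs x hx
    have hεs1 : 0 ≤ ε * s x := mul_nonneg hε.le (by linarith [hsx.1])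
    have hεs2 : ε * s x ≤ I Tt := le_trans
      (mul_le_mul_of_nonneg_left hsx.2 hε.le) hITt
    have hmemIcc : ε * s x ∈ Set.Icc (I L) (I Tt) := by
      rw [hI0]; exact ⟨hεs1, hεs2⟩
    obtain ⟨t, _, htval⟩ := intermediate_value_Icc hLTt hIcont.continuousOn hmemIcc
    refine ⟨t, ?_⟩
    have hcongr : ∫ x' in Ω, max (t - breg g x (T x')) 0 * ρ₀ x' = I t := by
      refine integral_congr_ae ?_
      filter_upwards [heq] with x' hh
      have hbe : breg g x (T x') = ftil x' := hh
      rw [hbe]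
    rw [hcongr, htval, one_div, inv_mul_cancel_left₀ hε.ne']
  choose! ψ hψ using key
  exact ⟨ψ, hψ⟩
end
end

section
/- Let Ω₀ ⊂ ℝ^d be an open bounded convex set satisfying the interior cone condition (there exist δ' > 0 and θ' ∈ (0,π) such that every x ∈ Ω₀ is the vertex of a cone of height δ' and opening angle θ' contained in Ω₀). Then there exist δ₀ > 0 and θ ∈ (0,π) such that for every δ ≤ δ₀ there is a height r_δ > 0 so that every x ∈ Ω₀^{δ,c} = {x ∈ Ω₀ : dist(x,∂Ω₀) ≤ δ} is the vertex of a cone of height r_δ and opening angle θ contained in Ω₀^{δ,c}. -/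
open MeasureTheory Filter Set Metric Bornology
open scoped RealInnerProductSpace ENNReal NNReal Topology

noncomputable section

private lemma aux_sq_le {A B : ℝ} (hA : 0 ≤ A) (hB : 0 ≤ B) (h : A ^ 2 ≤ B ^ 2) : A ≤ B := by
  nlinarith

/-- Concavity (2-point inequality) of the distance to the frontier on a convex open set. -/
private lemma aux_concave {d : ℕ} {Ω : Set (Euc d)} (hopen : IsOpen Ω) (hconv : Convex ℝ Ω)
    (hne : (frontier Ω).Nonempty)
    (hball : ∀ x ∈ Ω, Metric.ball x (Metric.infDist x (frontier Ω)) ⊆ Ω)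
    {p q : Euc d} (hp : p ∈ Ω) (hq : q ∈ Ω) {s : ℝ} (hs0 : 0 ≤ s) (hs1 : s ≤ 1) :
    s * Metric.infDist p (frontier Ω) + (1 - s) * Metric.infDist q (frontier Ω)
      ≤ Metric.infDist (s • p + (1 - s) • q) (frontier Ω) := by
  set F : Euc d → ℝ := fun z => Metric.infDist z (frontier Ω) with hF
  set m : Euc d := s • p + (1 - s) • q with hm
  rcases le_or_gt (s * F p + (1 - s) * F q) 0 with hS | hS
  · exact hS.trans Metric.infDist_nonneg
  by_contra hcon
  push_neg at hcon
  obtain ⟨y, hyf, hdy⟩ := (Metric.infDist_lt_iff hne).mp hcon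
  set S : ℝ := s * F p + (1 - s) * F q with hSdef
  set w : Euc d := y - m with hwdef
  have hwS : ‖w‖ < S := by
    have : ‖w‖ = dist m y := by rw [dist_eq_norm, hwdef, norm_sub_rev]
    rw [this]; exact hdy
  have hwnn : (0:ℝ) ≤ ‖w‖ := norm_nonneg _
  have hin : ∀ z ∈ Ω, z + (F z / S) • w ∈ Ω := by
    intro z hz
    rcases eq_or_lt_of_le (Metric.infDist_nonneg : 0 ≤ F z) with h0 | h0
    · have hz0 : F z = 0 := h0.symm
      rw [hz0, zero_div, zero_smul, add_zero]; exact hz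
    · apply hball z hz
      rw [Metric.mem_ball, dist_eq_norm]
      have h1 : z + (F z / S) • w - z = (F z / S) • w := by abel
      rw [h1, norm_smul, Real.norm_eq_abs, abs_of_nonneg (div_nonneg h0.le hS.le)]
      calc F z / S * ‖w‖ < F z / S * S := by
            exact mul_lt_mul_of_pos_left hwS (div_pos h0 hS)
        _ = F z := by field_simp
  have h1 := hin p hp
  have h2 := hin q hq
  have hcoef : (s * (F p / S)) • w + ((1 - s) * (F q / S)) • w = w := by
    rw [← add_smul]
    have : s * (F p / S) + (1 - s) * (F q / S) = 1 := by
      field_simp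
      linarith [hSdef]
    rw [this, one_smul]
  have hy_eq : y = s • (p + (F p / S) • w) + (1 - s) • (q + (F q / S) • w) := by
    rw [smul_add, smul_add, smul_smul, smul_smul]
    calc y = m + w := by rw [hwdef]; abel
      _ = (s • p + (1 - s) • q) + ((s * (F p / S)) • w + ((1 - s) * (F q / S)) • w) := by
          rw [hcoef, hm]
      _ = s • p + (s * (F p / S)) • w + ((1 - s) • q + ((1 - s) * (F q / S)) • w) := by abel
  have hyΩ : y ∈ Ω := by
    rw [hy_eq]
    exact hconv h1 h2 hs0 (by linarith) (by ring)
  exact ((hopen.frontier_eq ▸ hyf).2) hyΩ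

set_option maxHeartbeats 1000000 in
/-- Lemma 4.5: the frame `Ω₀^{δ,c}` of a convex domain satisfies a uniform interior cone
condition. -/
theorem frame_cone_condition {d : ℕ} (hd : 1 ≤ d) (Ω₀ : Set (Euc d))
    (hopen : IsOpen Ω₀) (hbdd : IsBounded Ω₀) (hconv : Convex ℝ Ω₀)
    (δ' θ' : ℝ) (hδ' : 0 < δ') (hθ' : θ' ∈ Set.Ioo (0 : ℝ) Real.pi)
    (hcone : otConeCond Ω₀ δ' θ') :
    ∃ δ₀ > (0 : ℝ), ∃ θ ∈ Set.Ioo (0 : ℝ) Real.pi, ∀ δ : ℝ, 0 < δ → δ ≤ δ₀ →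
      ∃ r > (0 : ℝ), ∀ x ∈ frameSet Ω₀ δ,
        ∃ v : Euc d, ‖v‖ = 1 ∧ otCone x v r θ ⊆ frameSet Ω₀ δ := by
  classical
  -- trivial case: Ω₀ empty
  rcases Set.eq_empty_or_nonempty Ω₀ with hΩe | ⟨z₀, hz₀⟩
  · refine ⟨1, one_pos, Real.pi / 2, ⟨by positivity, by linarith [Real.pi_pos]⟩, ?_⟩
    intro δ hδ hδ0
    refine ⟨1, one_pos, fun x hx => ?_⟩
    exact absurd hx.1 (by simp [hΩe])
  haveI : Nonempty (Fin d) := ⟨⟨0, hd⟩⟩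
  haveI : Nontrivial (Euc d) := (EuclideanSpace.equiv (Fin d) ℝ).toEquiv.nontrivial
  have hne_univ : Ω₀ ≠ Set.univ := by
    rintro rfl
    exact NormedSpace.unbounded_univ ℝ (Euc d) hbdd
  set F : Euc d → ℝ := fun z => Metric.infDist z (frontier Ω₀) with hFdef
  have hfr_ne : (frontier Ω₀).Nonempty := by
    obtain ⟨yb, hyb, _⟩ := exists_mem_frontier_infDist_compl_eq_dist hz₀ hne_univ
    exact ⟨yb, hyb⟩
  have hfr_not : ∀ y ∈ frontier Ω₀, y ∉ Ω₀ := fun y hy => (hopen.frontier_eq ▸ hy).2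
  have hFc : ∀ x ∈ Ω₀, Metric.infDist x Ω₀ᶜ = F x := by
    intro x hx
    obtain ⟨y, hyf, hy⟩ := exists_mem_frontier_infDist_compl_eq_dist hx hne_univ
    refine le_antisymm ?_ ?_
    · exact Metric.infDist_le_infDist_of_subset (fun p hp => hfr_not p hp) hfr_ne
    · rw [hy]; exact Metric.infDist_le_dist_of_mem hyf
  have hball : ∀ x ∈ Ω₀, Metric.ball x (F x) ⊆ Ω₀ := by
    intro x hx
    rw [← hFc x hx]
    exact Metric.ball_infDist_compl_subset
  set ρ : ℝ := F z₀ with hρdef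
  have hρ : 0 < ρ := by
    obtain ⟨ε, hε, hbε⟩ := Metric.isOpen_iff.1 hopen z₀ hz₀
    rcases lt_or_ge (F z₀) ε with h | h
    · obtain ⟨y, hyf, hdy⟩ := (Metric.infDist_lt_iff hfr_ne).mp h
      exact absurd (hbε (by rw [Metric.mem_ball, dist_comm]; exact hdy)) (hfr_not y hyf)
    · exact lt_of_lt_of_le hε h
  obtain ⟨C, hC⟩ := Metric.isBounded_iff.1 hbdd
  set D : ℝ := max C 1 with hDdef
  have hD0 : (0:ℝ) < D := lt_of_lt_of_le one_pos (le_max_right _ _)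
  have hDd : ∀ x ∈ Ω₀, ∀ y ∈ Ω₀, dist x y ≤ D := fun x hx y hy =>
    (hC hx hy).trans (le_max_left _ _)
  set c : ℝ := min (ρ / (2 * D)) 1 with hcdef
  have hc : 0 < c := lt_min (by positivity) one_pos
  have hc1 : c ≤ 1 := min_le_right _ _
  have hcρ : c ≤ ρ / (2 * D) := min_le_left _ _
  refine ⟨ρ / 2, by positivity, 2 * Real.arctan c,
    ⟨by linarith [show Real.arctan 0 < Real.arctan c from Real.arctan_strictMono hc, Real.arctan_zero], by linarith [Real.arctan_lt_pi_div_two c]⟩, ?_⟩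
  have harcpos : 0 < Real.arctan c := by
    have := Real.arctan_strictMono hc
    rwa [Real.arctan_zero] at this
  have harclt : Real.arctan c < Real.pi / 2 := Real.arctan_lt_pi_div_two c
  set k : ℝ := Real.cos (Real.arctan c) with hkdef
  have hk0 : 0 < k := Real.cos_arctan_pos c
  have h1c : (0:ℝ) < 1 + c ^ 2 := by positivity
  have hk2 : k ^ 2 * (1 + c ^ 2) = 1 := by
    have : k ^ 2 = 1 / (1 + c ^ 2) := by
      rw [hkdef, Real.cos_arctan, div_pow, one_pow, Real.sq_sqrt h1c.le]
    rw [this]; field_simp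
  have hhalf : (2 * Real.arctan c) / 2 = Real.arctan c := by ring
  -- decomposition of cone vectors
  have hdecomp : ∀ v u : Euc d, ‖v‖ = 1 → u ≠ 0 → ‖u‖ * k ≤ ⟪v, u⟫ →
      0 < ⟪v, u⟫ ∧ ‖u - ⟪v, u⟫ • v‖ ≤ c * ⟪v, u⟫ ∧ ‖u‖ ≤ 2 * ⟪v, u⟫ := by
    intro v u hv hu h1
    set a : ℝ := ⟪v, u⟫ with hadef
    have hupos : 0 < ‖u‖ := norm_pos_iff.mpr hu
    have ha : 0 < a := lt_of_lt_of_le (by positivity) h1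
    set w : Euc d := u - a • v with hwdef
    have hvv : ⟪v, v⟫ = 1 := by
      rw [real_inner_self_eq_norm_mul_norm, hv, mul_one]
    have hvw : ⟪v, w⟫ = 0 := by
      rw [hwdef, inner_sub_right, real_inner_smul_right, hvv, hadef]; ring
    have horth : ⟪a • v, w⟫ = 0 := by rw [real_inner_smul_left, hvw, mul_zero]
    have hav : ‖a • v‖ ^ 2 = a ^ 2 := by
      rw [norm_smul, Real.norm_eq_abs, hv, mul_one, sq_abs]
    have hnu : ‖u‖ ^ 2 = a ^ 2 + ‖w‖ ^ 2 := by
      have hueq : u = a • v + w := by rw [hwdef]; abel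
      calc ‖u‖ ^ 2 = ‖a • v + w‖ ^ 2 := by rw [← hueq]
        _ = ‖a • v‖ ^ 2 + 2 * ⟪a • v, w⟫ + ‖w‖ ^ 2 := norm_add_sq_real _ _
        _ = a ^ 2 + ‖w‖ ^ 2 := by rw [horth, hav]; ring
    have hsq : ‖u‖ ^ 2 * k ^ 2 ≤ a ^ 2 := by
      have hmm := mul_le_mul h1 h1 (by positivity) ha.le
      nlinarith [hmm]
    have hw2 : ‖w‖ ^ 2 ≤ (c * a) ^ 2 := by nlinarith [mul_pos hk0 hk0, hk2, hnu, hsq]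
    refine ⟨ha, aux_sq_le (norm_nonneg w) (by positivity) hw2, ?_⟩
    refine aux_sq_le (norm_nonneg u) (by positivity) ?_
    have hca : (c * a) ^ 2 ≤ a ^ 2 := by
      have h15 : 0 ≤ (1 - c ^ 2) * a ^ 2 :=
        mul_nonneg (by nlinarith) (sq_nonneg a)
      nlinarith [h15]
    nlinarith [hnu, hw2, hca, ha.le]
  -- the frame-distance function is 1-Lipschitz
  have hlip : ∀ x y : Euc d, F y ≤ F x + dist y x := fun x y =>
    Metric.infDist_le_infDist_add_dist
  intro δ hδpos hδle
  refine ⟨δ / 8, by positivity, ?_⟩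
  intro x hx
  obtain ⟨hxΩ, hxd⟩ := hx
  have hxd' : F x ≤ δ := hxd
  rcases lt_or_ge (F x) (δ / 2) with hcase | hcase
  · -- inward cone: x is very close to the boundary
    set e : Euc d := z₀ - x with hedef
    have hee : ρ / 2 ≤ ‖e‖ := by
      have := hlip x z₀
      rw [dist_eq_norm] at this
      have hzx : ‖z₀ - x‖ = ‖e‖ := rfl
      rw [hzx] at this
      linarith
    have he0 : e ≠ 0 := by
      intro h
      rw [h, norm_zero] at hee
      linarith
    set v : Euc d := ‖e‖⁻¹ • e with hvdef
    have hv : ‖v‖ = 1 := norm_smul_inv_norm he0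
    refine ⟨v, hv, ?_⟩
    rintro y ⟨u, rfl, h1, h2⟩
    by_cases hu : u = 0
    · rw [hu, add_zero]; exact ⟨hxΩ, hxd⟩
    rw [hhalf] at h1
    obtain ⟨ha, hwle, hule⟩ := hdecomp v u hv hu h1
    set a : ℝ := ⟪v, u⟫
    set w : Euc d := u - a • v with hwdef
    have hepos : 0 < ‖e‖ := by linarith
    set s : ℝ := a / ‖e‖ with hsdef
    have hs0 : 0 < s := div_pos ha hepos
    have hs1 : s ≤ 1 := by
      rw [hsdef, div_le_one hepos]
      calc a ≤ δ / 8 := h2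
        _ ≤ ρ / 2 := by linarith
        _ ≤ ‖e‖ := hee
    set q : Euc d := z₀ + s⁻¹ • w with hqdef
    have heD : ‖e‖ ≤ D := by
      have := hDd z₀ hz₀ x hxΩ
      rw [dist_eq_norm] at this
      exact this
    have hq : q ∈ Ω₀ := by
      apply hball z₀ hz₀
      rw [Metric.mem_ball, dist_eq_norm]
      have h3 : q - z₀ = s⁻¹ • w := by rw [hqdef]; abel
      rw [h3, norm_smul, Real.norm_eq_abs, abs_of_nonneg (inv_nonneg.mpr hs0.le)]
      have h4 : s⁻¹ * ‖w‖ ≤ s⁻¹ * (c * a) :=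
        mul_le_mul_of_nonneg_left hwle (inv_nonneg.mpr hs0.le)
      have h5 : s⁻¹ * (c * a) = c * ‖e‖ := by
        rw [hsdef]; field_simp
      have h6 : c * ‖e‖ ≤ c * D := mul_le_mul_of_nonneg_left heD hc.le
      have h7 : c * D ≤ ρ / 2 := by
        calc c * D ≤ ρ / (2 * D) * D := mul_le_mul_of_nonneg_right hcρ hD0.le
          _ = ρ / 2 := by field_simp
      calc s⁻¹ * ‖w‖ ≤ c * D := by linarith [h4, h5.le, h6]
        _ < ρ := by linarith
    have hy_eq : x + u = (1 - s) • x + s • q := by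
      have hsw : s • (s⁻¹ • w) = w := smul_inv_smul₀ hs0.ne' w
      have hav : a • v = s • e := by
        rw [hvdef, smul_smul, hsdef, div_eq_mul_inv]
      have hueq : u = a • v + w := by rw [hwdef]; abel
      rw [hqdef, hueq, hav, hedef, smul_sub, smul_add, hsw, sub_smul, one_smul]
      abel
    have hyΩ : x + u ∈ Ω₀ := by
      rw [hy_eq]
      exact hconv hxΩ hq (by linarith) hs0.le (by ring)
    have hyF : F (x + u) ≤ δ := by
      have h8 := hlip x (x + u)
      have h9 : dist (x + u) x = ‖u‖ := by
        rw [dist_eq_norm]; congr 1; abel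
      rw [h9] at h8
      have : ‖u‖ ≤ 2 * (δ / 8) := by linarith [hule, h2]
      linarith
    exact ⟨hyΩ, hyF⟩
  · -- outward cone: x is at depth ≥ δ/2
    set e : Euc d := x - z₀ with hedef
    have hee : ρ / 2 ≤ ‖e‖ := by
      have := hlip x z₀
      rw [dist_eq_norm] at this
      have hzx : ‖z₀ - x‖ = ‖e‖ := by rw [hedef, norm_sub_rev]
      rw [hzx] at this
      linarith
    have hepos : 0 < ‖e‖ := by linarith
    have he0 : e ≠ 0 := by
      intro h; rw [h, norm_zero] at hepos; exact lt_irrefl 0 hepos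
    set v : Euc d := ‖e‖⁻¹ • e with hvdef
    have hv : ‖v‖ = 1 := norm_smul_inv_norm he0
    refine ⟨v, hv, ?_⟩
    rintro y ⟨u, rfl, h1, h2⟩
    by_cases hu : u = 0
    · rw [hu, add_zero]; exact ⟨hxΩ, hxd⟩
    rw [hhalf] at h1
    obtain ⟨ha, hwle, hule⟩ := hdecomp v u hv hu h1
    set a : ℝ := ⟪v, u⟫
    set w : Euc d := u - a • v with hwdef
    have heD : ‖e‖ ≤ D := by
      have := hDd x hxΩ z₀ hz₀
      rw [dist_eq_norm] at this
      exact this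
    set p : Euc d := x + a • v with hpdef
    have hpx : dist p x = a := by
      rw [dist_eq_norm]
      have : p - x = a • v := by rw [hpdef]; abel
      rw [this, norm_smul, Real.norm_eq_abs, hv, mul_one, abs_of_nonneg ha.le]
    have hp : p ∈ Ω₀ := by
      apply hball x hxΩ
      rw [Metric.mem_ball, hpx]
      linarith [h2]
    set t : ℝ := a / ‖e‖ with htdef
    have ht0 : 0 < t := div_pos ha hepos
    have h1t : (0:ℝ) < 1 + t := by linarith
    -- the convex-combination identity
    have hcomb : (1 / (1 + t)) • p + (1 - 1 / (1 + t)) • z₀ = x := by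
      have hav : a • v = t • e := by
        rw [hvdef, smul_smul, htdef, div_eq_mul_inv]
      rw [hpdef, hav, hedef, smul_sub]
      have hne : (1 : ℝ) + t ≠ 0 := by linarith
      match_scalars <;> field_simp <;> ring
    have hs0' : (0:ℝ) ≤ 1 / (1 + t) := by positivity
    have hs1' : 1 / (1 + t) ≤ 1 := by
      rw [div_le_one h1t]; linarith
    have hconc := aux_concave hopen hconv hfr_ne hball hp hz₀ hs0' hs1'
    rw [hcomb] at hconc
    -- hconc : (1/(1+t)) * F p + (1 - 1/(1+t)) * F z₀ ≤ F x
    have hFp : F p + t * ρ ≤ (1 + t) * F x := by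
      have h1s : 1 - 1 / (1 + t) = t / (1 + t) := by field_simp; ring
      rw [h1s] at hconc
      have := mul_le_mul_of_nonneg_left hconc h1t.le
      calc F p + t * ρ = (1 + t) * (1 / (1 + t) * F p + t / (1 + t) * ρ) := by
            field_simp
        _ ≤ (1 + t) * F x := this
    have hyF : F (x + u) ≤ δ := by
      have h8 := hlip p (x + u)
      have h9 : dist (x + u) p = ‖w‖ := by
        rw [dist_eq_norm, hpdef, hwdef]; congr 1; abel
      rw [h9] at h8
      -- F p ≤ F x + t * (F x - ρ) ≤ δ - t * ρ / 2, and ‖w‖ ≤ c * a ≤ t * ρ / 2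
      have hFx2 : F x ≤ ρ / 2 := le_trans hxd' hδle
      have h10 : F p ≤ δ - t * (ρ / 2) := by nlinarith
      have h11 : c * a ≤ t * (ρ / 2) := by
        have ht' : a / D ≤ t := by
          rw [htdef]
          exact div_le_div_of_nonneg_left ha.le hepos heD
        have h12 : c * a ≤ ρ / (2 * D) * a := mul_le_mul_of_nonneg_right hcρ ha.le
        have h13 : ρ / (2 * D) * a = a / D * (ρ / 2) := by field_simp
        have h14 : a / D * (ρ / 2) ≤ t * (ρ / 2) :=
          mul_le_mul_of_nonneg_right ht' (by positivity)
        linarith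
      linarith [hwle]
    have hyΩ : x + u ∈ Ω₀ := by
      apply hball x hxΩ
      rw [Metric.mem_ball, dist_eq_norm]
      have : x + u - x = u := by abel
      rw [this]
      calc ‖u‖ ≤ 2 * a := hule
        _ ≤ 2 * (δ / 8) := by linarith [h2]
        _ < δ / 2 := by linarith
        _ ≤ F x := hcase
    exact ⟨hyΩ, hyF⟩
end
end
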